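/- arXiv:2104.10053 — 4 statements merged into one kernel-verified Lean document; each statement's English description precedes it below -/
import Mathlib

section
/- Smallness of the near-singular part of the linearized operator (first estimate of Lemma 2.3): Let -3 < γ < 0, β ≥ 0, 0 < q < 1, ϑ ≥ 0. There exists a constant C > 0 such that for every ε ∈ (0,1), every t ≥ 0, every v ∈ ℝ³, and every measurable f : ℝ³ → ℝ with ‖w_{q,ϑ,β}(·,t) f‖_{L^∞} < ∞: w_{q,ϑ,β}(v,t) ∫_{|v-u|≤2ε} ∫_{S²} |v-u|^γ q₀(θ) √μ(u) [√μ(v)|f(u)| + √μ(v')|f(u')| + √μ(u')|f(v')|] dω du ≤ C μ(v)^{(1-q)/8} ε^{γ+3} ‖w_{q,ϑ,β}(·,t) f‖_{L^∞}. -/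
noncomputable section

open MeasureTheory Real
open scoped ENNReal

/-- Velocity space `ℝ³`. -/
abbrev V3 : Type := EuclideanSpace ℝ (Fin 3)

/-- The spatial torus `𝕋³`. -/
abbrev T3 : Type := Fin 3 → AddCircle (1 : ℝ)

/-- The global Maxwellian `μ(v) = (2π)^{-3/2} e^{-|v|²/2}`. -/
def gMaxw (v : V3) : ℝ := (2 * π) ^ (-(3 : ℝ) / 2) * Real.exp (-‖v‖ ^ 2 / 2)

/-- Real inner product on `ℝ³`. -/
def rinner (x y : V3) : ℝ := inner ℝ x y

/-- Post-collisional velocity `u' = u + ((v-u)·ω) ω`. -/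
def uPost (u v ω : V3) : V3 := u + rinner (v - u) ω • ω

/-- Post-collisional velocity `v' = v - ((v-u)·ω) ω`. -/
def vPost (u v ω : V3) : V3 := v - rinner (v - u) ω • ω

/-- The cosine `cos θ = (v-u)·ω/|v-u|`. -/
def cosAngle (u v ω : V3) : ℝ := rinner (v - u) ω / ‖v - u‖

/-- Surface measure on the unit sphere `S² ⊆ ℝ³`. -/
def sphMeasure : Measure (Metric.sphere (0 : V3) 1) := (volume : Measure V3).toSphere

/-- The soft potential collision kernel `B(v-u,ω) = |v-u|^γ q₀(cos θ)`. -/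
def Bker (γ : ℝ) (q₀ : ℝ → ℝ) (u v ω : V3) : ℝ := ‖v - u‖ ^ γ * q₀ (cosAngle u v ω)

/-- The collision frequency `ν(v)`. -/
def nuColl (γ : ℝ) (q₀ : ℝ → ℝ) (v : V3) : ℝ :=
  ∫ u : V3, ∫ ω : Metric.sphere (0 : V3) 1, Bker γ q₀ u v ω * gMaxw u ∂sphMeasure

/-- The Boltzmann collision operator `Q(G,F)`. -/
def Qop (γ : ℝ) (q₀ : ℝ → ℝ) (G F : V3 → ℝ) (v : V3) : ℝ :=
  ∫ u : V3, ∫ ω : Metric.sphere (0 : V3) 1,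
    Bker γ q₀ u v ω * (G (uPost u v ω) * F (vPost u v ω) - G u * F v) ∂sphMeasure

/-- Gain part `K₂ g` of the linearized operator. -/
def Kgain (γ : ℝ) (q₀ : ℝ → ℝ) (g : V3 → ℝ) (v : V3) : ℝ :=
  ∫ u : V3, ∫ ω : Metric.sphere (0 : V3) 1,
    Bker γ q₀ u v ω * Real.sqrt (gMaxw u) *
      (Real.sqrt (gMaxw (vPost u v ω)) * g (uPost u v ω)
        + Real.sqrt (gMaxw (uPost u v ω)) * g (vPost u v ω)) ∂sphMeasure

/-- Loss part `K₁ g` of the linearized operator. -/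
def Kloss (γ : ℝ) (q₀ : ℝ → ℝ) (g : V3 → ℝ) (v : V3) : ℝ :=
  ∫ u : V3, ∫ ω : Metric.sphere (0 : V3) 1,
    Bker γ q₀ u v ω * Real.sqrt (gMaxw u) * Real.sqrt (gMaxw v) * g u ∂sphMeasure

/-- The integral operator `K = K₂ - K₁`. -/
def Kop (γ : ℝ) (q₀ : ℝ → ℝ) (g : V3 → ℝ) (v : V3) : ℝ := Kgain γ q₀ g v - Kloss γ q₀ g v

/-- The nonlinear gain term `Γ₊(g,f)`. -/
def GammaPlus (γ : ℝ) (q₀ : ℝ → ℝ) (g f : V3 → ℝ) (v : V3) : ℝ :=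
  ∫ u : V3, ∫ ω : Metric.sphere (0 : V3) 1,
    Bker γ q₀ u v ω * Real.sqrt (gMaxw u) * g (uPost u v ω) * f (vPost u v ω) ∂sphMeasure

/-- The nonlinear loss term `Γ₋(g,f)`. -/
def GammaMinus (γ : ℝ) (q₀ : ℝ → ℝ) (g f : V3 → ℝ) (v : V3) : ℝ :=
  f v * ∫ u : V3, ∫ ω : Metric.sphere (0 : V3) 1,
    Bker γ q₀ u v ω * Real.sqrt (gMaxw u) * g u ∂sphMeasure

/-- The time-dependent velocity weight `w_{q,ϑ,β}(v,t)`. -/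
def wgt (q ϑ β : ℝ) (v : V3) (t : ℝ) : ℝ :=
  (1 + ‖v‖ ^ 2) ^ β * Real.exp (q / 8 * (1 + (1 + t) ^ (-ϑ)) * ‖v‖ ^ 2)

/-- The time-modified collision frequency `ν̃(v,t)`. -/
def nuTilde (γ q ϑ : ℝ) (q₀ : ℝ → ℝ) (v : V3) (t : ℝ) : ℝ :=
  nuColl γ q₀ v + ϑ * q * ‖v‖ ^ 2 / (8 * (1 + t) ^ (ϑ + 1))

/-- Free transport on the torus: `x - s v`. -/
def shiftT (x : T3) (s : ℝ) (v : V3) : T3 := fun i => x i - ((s * v i : ℝ) : AddCircle (1 : ℝ))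

/-- `x + s v` on the torus. -/
def addT (x : T3) (s : ℝ) (v : V3) : T3 := fun i => x i + ((s * v i : ℝ) : AddCircle (1 : ℝ))

/-- `L^∞` norm (in `ℝ≥0∞`) on `𝕋³ × ℝ³`. -/
def linfXV (g : T3 → V3 → ℝ) : ℝ≥0∞ :=
  eLpNorm (fun p : T3 × V3 => g p.1 p.2) ⊤ volume

/-- `L^∞` norm (as a real number) on `𝕋³ × ℝ³`. -/
def linfXVr (g : T3 → V3 → ℝ) : ℝ := (linfXV g).toReal

/-- The relative entropy `ℰ(F)`. -/
def relEntropy (F : T3 → V3 → ℝ) : ℝ :=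
  ∫ x : T3, ∫ v : V3,
    (F x v / gMaxw v * Real.log (F x v / gMaxw v) - F x v / gMaxw v + 1) * gMaxw v

/-- `h = w f` is a mild solution of the perturbed Boltzmann equation on the time
interval `[0,T]` (Duhamel identity along characteristics). -/
def IsMildSolutionOn (γ q ϑ β : ℝ) (q₀ : ℝ → ℝ) (f : ℝ → T3 → V3 → ℝ) (T : ℝ) : Prop :=
  ∀ t : ℝ, 0 ≤ t → t ≤ T → ∀ᵐ p : T3 × V3,
    wgt q ϑ β p.2 t * f t p.1 p.2 =
      Real.exp (-(∫ τ in (0 : ℝ)..t, nuTilde γ q ϑ q₀ p.2 τ)) *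
          (wgt q ϑ β p.2 0 * f 0 (shiftT p.1 t p.2) p.2)
      + ∫ s in (0 : ℝ)..t,
          Real.exp (-(∫ τ in s..t, nuTilde γ q ϑ q₀ p.2 τ)) *
            (wgt q ϑ β p.2 s *
              (Kop γ q₀ (f s (shiftT p.1 (t - s) p.2)) p.2
                + GammaPlus γ q₀ (f s (shiftT p.1 (t - s) p.2))
                    (f s (shiftT p.1 (t - s) p.2)) p.2
                - GammaMinus γ q₀ (f s (shiftT p.1 (t - s) p.2))
                    (f s (shiftT p.1 (t - s) p.2)) p.2))

/-- `h = w f` is a global-in-time mild solution of the perturbed Boltzmann equation. -/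
def IsMildSolution (γ q ϑ β : ℝ) (q₀ : ℝ → ℝ) (f : ℝ → T3 → V3 → ℝ) : Prop :=
  ∀ T : ℝ, 0 ≤ T → IsMildSolutionOn γ q ϑ β q₀ f T

section Aux

open MeasureTheory Real

lemma polyExp (β : ℝ) (hβ : 0 ≤ β) :
    ∃ K : ℝ, 1 ≤ K ∧ ∀ s : ℝ, 0 ≤ s → (1 + s) ^ β * Real.exp (-(s / 16)) ≤ K := by
  set K₀ : ℝ := max 1 (16 * (β + 1)) with hK₀def
  refine ⟨K₀ ^ β, Real.one_le_rpow (le_max_left _ _) hβ, ?_⟩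
  intro s hs
  have hK₀1 : (1:ℝ) ≤ K₀ := le_max_left _ _
  have hK₀2 : 16 * (β + 1) ≤ K₀ := le_max_right _ _
  have hc : (0:ℝ) < 16 * (β + 1) := by nlinarith
  have h1 : 1 + s ≤ K₀ * Real.exp (s / (16 * (β + 1))) := by
    have he := Real.add_one_le_exp (s / (16 * (β + 1)))
    have hd : 0 ≤ s / (16 * (β + 1)) := div_nonneg hs hc.le
    have hs' : s = 16 * (β + 1) * (s / (16 * (β + 1))) := by field_simp
    nlinarith [mul_le_mul_of_nonneg_left he (le_trans zero_le_one hK₀1),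
      mul_le_mul_of_nonneg_right hK₀2 hd]
  have h2 : (1 + s) ^ β ≤ K₀ ^ β * Real.exp (s / (16 * (β + 1)) * β) := by
    have := Real.rpow_le_rpow (by linarith) h1 hβ
    rwa [Real.mul_rpow (by positivity) (Real.exp_nonneg _), ← Real.exp_mul] at this
  calc (1 + s) ^ β * Real.exp (-(s / 16))
      ≤ (K₀ ^ β * Real.exp (s / (16 * (β + 1)) * β)) * Real.exp (-(s / 16)) :=
        mul_le_mul_of_nonneg_right h2 (Real.exp_nonneg _)
    _ = K₀ ^ β * Real.exp (s / (16 * (β + 1)) * β + -(s / 16)) := by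
        rw [mul_assoc, ← Real.exp_add]
    _ ≤ K₀ ^ β * 1 := by
        apply mul_le_mul_of_nonneg_left _ (Real.rpow_nonneg (by positivity) _)
        rw [Real.exp_le_one_iff]
        have : s / (16 * (β + 1)) * β ≤ s / 16 := by
          rw [div_mul_eq_mul_div, div_le_div_iff₀ hc (by norm_num)]
          nlinarith
        linarith
    _ = K₀ ^ β := mul_one _

lemma sqrt_gMaxw (z : V3) :
    Real.sqrt (gMaxw z) = (2 * π) ^ (-(3 : ℝ) / 4) * Real.exp (-(‖z‖ ^ 2 / 4)) := by
  unfold gMaxw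
  rw [Real.sqrt_mul (by positivity)]
  congr 1
  · rw [Real.sqrt_eq_rpow, ← Real.rpow_mul (by positivity)]
    norm_num
  · rw [← Real.exp_half]
    congr 1
    ring

lemma energy_id (u v : V3) (ω : V3) (hω : ‖ω‖ = 1) :
    ‖uPost u v ω‖ ^ 2 + ‖vPost u v ω‖ ^ 2 = ‖u‖ ^ 2 + ‖v‖ ^ 2 := by
  unfold uPost vPost rinner
  set c : ℝ := (inner ℝ (v - u) ω : ℝ) with hc
  have hcc : c = (inner ℝ v ω : ℝ) - (inner ℝ u ω : ℝ) := by rw [hc, inner_sub_left]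
  have hnc : ‖c • ω‖ ^ 2 = c ^ 2 := by
    rw [norm_smul, Real.norm_eq_abs, hω, mul_one, sq_abs]
  have h1 : ‖u + c • ω‖ ^ 2 = ‖u‖ ^ 2 + 2 * (c * (inner ℝ u ω : ℝ)) + c ^ 2 := by
    rw [@norm_add_sq_real, real_inner_smul_right, hnc]
  have h2 : ‖v - c • ω‖ ^ 2 = ‖v‖ ^ 2 - 2 * (c * (inner ℝ v ω : ℝ)) + c ^ 2 := by
    rw [@norm_sub_sq_real, real_inner_smul_right, hnc]
  rw [h1, h2]
  linear_combination (2*c) * hcc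

lemma cosAngle_abs_le (u v : V3) (ω : V3) (hω : ‖ω‖ = 1) : |cosAngle u v ω| ≤ 1 := by
  unfold cosAngle rinner
  rcases eq_or_ne (v - u) 0 with h | h
  · simp [h]
  · have hn : 0 < ‖v - u‖ := norm_pos_iff.mpr h
    rw [abs_div, abs_of_pos hn, div_le_one hn]
    have := abs_real_inner_le_norm (v - u) ω
    rwa [hω, mul_one] at this

lemma wgt_pos (q ϑ β : ℝ) (z : V3) (t : ℝ) : 0 < wgt q ϑ β z t := by
  unfold wgt
  positivity

lemma exp_le_wgt (q ϑ β : ℝ) (hβ : 0 ≤ β) (z : V3) (t : ℝ) :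
    Real.exp (q / 8 * (1 + (1 + t) ^ (-ϑ)) * ‖z‖ ^ 2) ≤ wgt q ϑ β z t := by
  unfold wgt
  nth_rewrite 1 [← one_mul (Real.exp _)]
  have h1 : (1:ℝ) ≤ (1 + ‖z‖ ^ 2) ^ β :=
    Real.one_le_rpow (by nlinarith [sq_nonneg ‖z‖]) hβ
  exact mul_le_mul_of_nonneg_right h1 (Real.exp_nonneg _)

lemma coord_le_norm (x : V3) (i : Fin 3) : |x i| ≤ ‖x‖ := by
  rw [EuclideanSpace.norm_eq]
  rw [show |x i| = Real.sqrt (x i ^ 2) from (Real.sqrt_sq_eq_abs _).symm]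
  apply Real.sqrt_le_sqrt
  have := Finset.single_le_sum (f := fun j : Fin 3 => ‖x j‖ ^ 2)
    (fun j _ => by positivity) (Finset.mem_univ i)
  simpa [Real.norm_eq_abs, sq_abs] using this

end Aux
section Aux2

open MeasureTheory Real

set_option maxHeartbeats 1000000 in
lemma term_bound {q ϑ β K : ℝ} (hβ : 0 ≤ β) (hq0 : 0 < q) (hq1 : q < 1) (hϑ : 0 ≤ ϑ)
    (hK : ∀ s : ℝ, 0 ≤ s → (1 + s) ^ β * Real.exp (-(s / 16)) ≤ K)
    {t : ℝ} (ht : 0 ≤ t) {u v x y : V3} (hxy : ‖x‖ ^ 2 + ‖y‖ ^ 2 = ‖u‖ ^ 2 + ‖v‖ ^ 2)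
    (huv : ‖v - u‖ ≤ 2) {f : V3 → ℝ} {M : ℝ} (hf : ∀ z, |wgt q ϑ β z t * f z| ≤ M) :
    wgt q ϑ β v t * (Real.sqrt (gMaxw u) * (Real.sqrt (gMaxw x) * |f y|))
      ≤ (2 * π) ^ (-(3 : ℝ) / 2) * Real.exp 1 * K * M *
          Real.exp (-((1 - q) * ‖v‖ ^ 2 / 16)) := by
  have hM : 0 ≤ M := le_trans (abs_nonneg _) (hf v)
  have hK1 : (1:ℝ) ≤ K := by simpa using hK 0 le_rfl
  set a : ℝ := q / 8 * (1 + (1 + t) ^ (-ϑ)) with ha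
  have hr0 : (0:ℝ) ≤ (1 + t) ^ (-ϑ) := Real.rpow_nonneg (by linarith) _
  have hr1 : (1 + t) ^ (-ϑ) ≤ 1 :=
    Real.rpow_le_one_of_one_le_of_nonpos (by linarith) (neg_nonpos.mpr hϑ)
  have ha0 : 0 < a := by rw [ha]; nlinarith
  have haq : a ≤ 1 / 4 := by rw [ha]; nlinarith
  -- bound on |f y|
  have hfy : |f y| ≤ M * Real.exp (-(a * ‖y‖ ^ 2)) := by
    have h1 := hf y
    rw [abs_mul, abs_of_pos (wgt_pos q ϑ β y t)] at h1
    have h2 : Real.exp (a * ‖y‖ ^ 2) ≤ wgt q ϑ β y t := by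
      rw [ha]; exact exp_le_wgt q ϑ β hβ y t
    have h3 : |f y| * Real.exp (a * ‖y‖ ^ 2) ≤ M := by
      calc |f y| * Real.exp (a * ‖y‖ ^ 2) ≤ |f y| * wgt q ϑ β y t :=
            mul_le_mul_of_nonneg_left h2 (abs_nonneg _)
        _ = wgt q ϑ β y t * |f y| := mul_comm _ _
        _ ≤ M := h1
    rw [Real.exp_neg]
    rw [show |f y| = |f y| * Real.exp (a * ‖y‖ ^ 2) * (Real.exp (a * ‖y‖ ^ 2))⁻¹ by
      field_simp]
    exact mul_le_mul_of_nonneg_right h3 (inv_nonneg.mpr (Real.exp_nonneg _))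
  -- expand weights
  have hwv : wgt q ϑ β v t = (1 + ‖v‖ ^ 2) ^ β * Real.exp (a * ‖v‖ ^ 2) := by
    unfold wgt; rw [ha]
  -- key exponential inequality
  have hvu2 : ‖v‖ ^ 2 ≤ 2 * ‖u‖ ^ 2 + 8 := by
    have h1 : ‖v‖ ≤ ‖v - u‖ + ‖u‖ := by
      calc ‖v‖ = ‖v - u + u‖ := by rw [sub_add_cancel]
        _ ≤ ‖v - u‖ + ‖u‖ := norm_add_le _ _
    have h2 : ‖v‖ ≤ 2 + ‖u‖ := by linarith
    have h3 : ‖v‖ ^ 2 ≤ (2 + ‖u‖) ^ 2 := by nlinarith [norm_nonneg v, norm_nonneg u]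
    nlinarith [sq_nonneg (‖u‖ - 2)]
  have hexp : Real.exp (a * ‖v‖ ^ 2) * Real.exp (-(‖u‖ ^ 2 / 4)) *
      Real.exp (-(‖x‖ ^ 2 / 4)) * Real.exp (-(a * ‖y‖ ^ 2))
      ≤ Real.exp 1 * Real.exp (-(‖v‖ ^ 2 / 8)) := by
    rw [← Real.exp_add, ← Real.exp_add, ← Real.exp_add, ← Real.exp_add]
    apply Real.exp_le_exp.mpr
    have e0 : a * (‖x‖ ^ 2 + ‖y‖ ^ 2) = a * (‖u‖ ^ 2 + ‖v‖ ^ 2) := by rw [hxy]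
    have e1 : a * ‖x‖ ^ 2 ≤ 1 / 4 * ‖x‖ ^ 2 := mul_le_mul_of_nonneg_right haq (sq_nonneg _)
    have e2 : 0 ≤ a * ‖u‖ ^ 2 := mul_nonneg ha0.le (sq_nonneg _)
    nlinarith
  -- put it together
  rw [hwv, sqrt_gMaxw, sqrt_gMaxw]
  set P : ℝ := (2 * π) ^ (-(3 : ℝ) / 4) with hP
  have hP0 : 0 ≤ P := Real.rpow_nonneg (by positivity) _
  have hPP : P * P = (2 * π) ^ (-(3 : ℝ) / 2) := by
    rw [hP, ← Real.rpow_add (by positivity)]; norm_num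
  calc (1 + ‖v‖ ^ 2) ^ β * Real.exp (a * ‖v‖ ^ 2) *
        (P * Real.exp (-(‖u‖ ^ 2 / 4)) * (P * Real.exp (-(‖x‖ ^ 2 / 4)) * |f y|))
      ≤ (1 + ‖v‖ ^ 2) ^ β * Real.exp (a * ‖v‖ ^ 2) *
        (P * Real.exp (-(‖u‖ ^ 2 / 4)) *
          (P * Real.exp (-(‖x‖ ^ 2 / 4)) * (M * Real.exp (-(a * ‖y‖ ^ 2))))) := by
        gcongr
    _ = (P * P) * M * ((1 + ‖v‖ ^ 2) ^ β *
          (Real.exp (a * ‖v‖ ^ 2) * Real.exp (-(‖u‖ ^ 2 / 4)) *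
            Real.exp (-(‖x‖ ^ 2 / 4)) * Real.exp (-(a * ‖y‖ ^ 2)))) := by ring
    _ ≤ (P * P) * M * ((1 + ‖v‖ ^ 2) ^ β * (Real.exp 1 * Real.exp (-(‖v‖ ^ 2 / 8)))) := by
        gcongr
    _ = (P * P) * Real.exp 1 * M *
          ((1 + ‖v‖ ^ 2) ^ β * Real.exp (-(‖v‖ ^ 2 / 16)) * Real.exp (-(‖v‖ ^ 2 / 16))) := by
        rw [show Real.exp (-(‖v‖ ^ 2 / 8)) =
          Real.exp (-(‖v‖ ^ 2 / 16)) * Real.exp (-(‖v‖ ^ 2 / 16)) by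
            rw [← Real.exp_add]; ring_nf]
        ring
    _ ≤ (P * P) * Real.exp 1 * M * (K * Real.exp (-((1 - q) * ‖v‖ ^ 2 / 16))) := by
        have hb1 : (1 + ‖v‖ ^ 2) ^ β * Real.exp (-(‖v‖ ^ 2 / 16)) ≤ K :=
          hK _ (sq_nonneg _)
        have hb2 : Real.exp (-(‖v‖ ^ 2 / 16)) ≤ Real.exp (-((1 - q) * ‖v‖ ^ 2 / 16)) := by
          apply Real.exp_le_exp.mpr
          have := mul_nonneg hq0.le (sq_nonneg ‖v‖)
          linarith
        have h0 : 0 ≤ (1 + ‖v‖ ^ 2) ^ β * Real.exp (-(‖v‖ ^ 2 / 16)) :=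
          mul_nonneg (Real.rpow_nonneg (by positivity) _) (Real.exp_nonneg _)
        apply mul_le_mul_of_nonneg_left _ (by positivity)
        exact mul_le_mul hb1 hb2 (Real.exp_nonneg _) (by linarith)
    _ = (2 * π) ^ (-(3 : ℝ) / 2) * Real.exp 1 * K * M *
          Real.exp (-((1 - q) * ‖v‖ ^ 2 / 16)) := by rw [← hPP]; ring

end Aux2
section Aux3

open MeasureTheory Real Set

lemma meas_rpow_const (c : ℝ) : Measurable (fun x : ℝ => x ^ c) := by measurability

set_option maxHeartbeats 1000000 in
lemma radial_bound (γ : ℝ) (hγl : -3 < γ) (hγu : γ < 0) :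
    ∃ c : ℝ, 0 < c ∧ ∀ (v : V3) (ε : ℝ), 0 < ε → ε ≤ 1 →
      IntegrableOn (fun u : V3 => ‖v - u‖ ^ γ) {u : V3 | ‖v - u‖ ≤ 2 * ε} volume ∧
      (∫ u in {u : V3 | ‖v - u‖ ≤ 2 * ε}, ‖v - u‖ ^ γ) ≤ c * ε ^ (γ + 3) := by
  set δ : ℝ := γ / 3 with hδ
  have hδ1 : (-1 : ℝ) < δ := by rw [hδ]; linarith
  have hδ0 : δ < 0 := by rw [hδ]; linarith
  have hδp : 0 < δ + 1 := by linarith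
  refine ⟨(2 * 2 ^ (δ + 1) / (δ + 1)) ^ 3, by positivity, ?_⟩
  intro v ε hε hε1
  set R : ℝ := 2 * ε with hR
  have hR0 : 0 < R := by positivity
  -- the 1D function
  set gp : ℝ → ℝ := Set.indicator (Set.Ioc (0:ℝ) R) (fun s => s ^ δ) with hgp
  set g : ℝ → ℝ := fun s => gp s + gp (-s) with hg
  have hgp0 : ∀ s, 0 ≤ gp s := by
    intro s
    rw [hgp]
    apply Set.indicator_nonneg
    intro s hs
    exact Real.rpow_nonneg hs.1.le _
  have hg0 : ∀ s, 0 ≤ g s := fun s => add_nonneg (hgp0 s) (hgp0 (-s))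
  have hgpInt : Integrable gp volume := by
    rw [hgp, integrable_indicator_iff measurableSet_Ioc]
    have h1 : IntervalIntegrable (fun s : ℝ => s ^ δ) volume 0 R :=
      intervalIntegral.intervalIntegrable_rpow' hδ1
    exact (intervalIntegrable_iff_integrableOn_Ioc_of_le hR0.le).mp h1
  have hgInt : Integrable g volume := hgpInt.add hgpInt.comp_neg
  have hgpVal : ∫ s, gp s = R ^ (δ + 1) / (δ + 1) := by
    rw [hgp, integral_indicator measurableSet_Ioc,
      ← intervalIntegral.integral_of_le hR0.le,
      integral_rpow (Or.inl hδ1), Real.zero_rpow (by linarith)]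
    ring
  have hgVal : ∫ s, g s = 2 * R ^ (δ + 1) / (δ + 1) := by
    rw [hg, integral_add hgpInt hgpInt.comp_neg, integral_neg_eq_self, hgpVal]
    ring
  -- the 3D dominating function
  set h : V3 → ℝ := fun u => ∏ i, g (v i - u i) with hh
  have e := (MeasurableEquiv.toLp 2 (Fin 3 → ℝ)).symm
  have hmp : MeasurePreserving ((MeasurableEquiv.toLp 2 (Fin 3 → ℝ)).symm) volume volume :=
    EuclideanSpace.volume_preserving_symm_measurableEquiv_toLp (Fin 3)
  have hH : Integrable (fun y : Fin 3 → ℝ => ∏ i, g (v i - y i)) volume := by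
    exact Integrable.fintype_prod (f := fun (i : Fin 3) (s : ℝ) => g (v i - s))
      (fun i => (integrable_comp_sub_left g (v i)).mpr hgInt)
  have hhInt : Integrable h volume := by
    have := (hmp.integrable_comp_emb
      ((MeasurableEquiv.toLp 2 (Fin 3 → ℝ)).symm).measurableEmbedding
      (g := fun y : Fin 3 → ℝ => ∏ i, g (v i - y i))).mpr hH
    exact this
  have hhVal : ∫ u, h u = (∫ s, g s) ^ 3 := by
    have h1 : ∫ u, h u = ∫ y : Fin 3 → ℝ, ∏ i, g (v i - y i) :=
      by
        have := hmp.integral_comp ((MeasurableEquiv.toLp 2 (Fin 3 → ℝ)).symm).measurableEmbedding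
          (fun y : Fin 3 → ℝ => ∏ i, g (v i - y i))
        exact this
    rw [h1, MeasureTheory.integral_fintype_prod_volume_eq_prod (ι := Fin 3)
      (f := fun (i : Fin 3) (s : ℝ) => g (v i - s))]
    have h2 : ∀ i : Fin 3, (∫ s, g (v i - s)) = ∫ s, g s := fun i =>
      integral_sub_left_eq_self g volume (v i)
    simp only [h2]
    rw [Finset.prod_const]
    norm_num
  -- measurability of the set
  have hSmeas : MeasurableSet {u : V3 | ‖v - u‖ ≤ 2 * ε} :=
    measurableSet_le ((continuous_const.sub continuous_id).norm.measurable) measurable_const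
  -- a.e. avoidance of hyperplanes
  have hae : ∀ᵐ u : V3, ∀ i : Fin 3, u i ≠ v i := by
    rw [ae_all_iff]
    intro i
    have h1 : volume {u : V3 | u i = v i} = 0 := by
      have h2 : {u : V3 | u i = v i} =
          ((MeasurableEquiv.toLp 2 (Fin 3 → ℝ)).symm) ⁻¹' {y : Fin 3 → ℝ | y i = v i} := rfl
      have h3 : MeasurableSet {y : Fin 3 → ℝ | y i = v i} :=
        measurableSet_eq_fun (measurable_pi_apply i) measurable_const
      rw [h2, hmp.measure_preimage h3.nullMeasurableSet]
      rw [MeasureTheory.volume_pi]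
      exact Measure.pi_hyperplane (fun _ : Fin 3 => (volume : Measure ℝ)) i (v i)
    rw [ae_iff]
    convert h1 using 2
    simp
  -- the domination
  have hdom : ∀ᵐ u ∂(volume.restrict {u : V3 | ‖v - u‖ ≤ 2 * ε}),
      ‖v - u‖ ^ γ ≤ h u := by
    filter_upwards [ae_restrict_of_ae hae, ae_restrict_mem hSmeas] with u hu huS
    have hvu : ∀ i : Fin 3, 0 < |v i - u i| := by
      intro i
      rw [abs_pos, sub_ne_zero]
      exact fun hh => hu i hh.symm
    have hcoord : ∀ i : Fin 3, |v i - u i| ≤ ‖v - u‖ := by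
      intro i
      have := coord_le_norm (v - u) i
      simpa using this
    have hnpos : 0 < ‖v - u‖ := lt_of_lt_of_le (hvu 0) (hcoord 0)
    have hfac : ∀ i : Fin 3, ‖v - u‖ ^ δ ≤ g (v i - u i) := by
      intro i
      have hle : |v i - u i| ≤ R := le_trans (hcoord i) huS
      have hkey : g (v i - u i) = |v i - u i| ^ δ := by
        rcases lt_trichotomy (v i - u i) 0 with hlt | heq | hgt
        · have h1 : gp (v i - u i) = 0 := by
            rw [hgp]
            apply Set.indicator_of_notMem
            intro hmem
            exact absurd hmem.1 (not_lt.mpr hlt.le)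
          have h2 : gp (-(v i - u i)) = (-(v i - u i)) ^ δ := by
            rw [hgp]
            apply Set.indicator_of_mem
            constructor
            · linarith
            · rw [abs_of_neg hlt] at hle; linarith
          rw [hg]
          simp only [h1, h2, zero_add]
          rw [abs_of_neg hlt]
        · exact absurd (hvu i) (by simp [heq])
        · have h1 : gp (v i - u i) = (v i - u i) ^ δ := by
            rw [hgp]
            apply Set.indicator_of_mem
            exact ⟨hgt, by rw [abs_of_pos hgt] at hle; linarith⟩
          have h2 : gp (-(v i - u i)) = 0 := by
            rw [hgp]
            apply Set.indicator_of_notMem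
            intro hmem
            have := hmem.1
            linarith
          rw [hg]
          simp only [h1, h2, add_zero]
          rw [abs_of_pos hgt]
      rw [hkey]
      exact Real.rpow_le_rpow_of_nonpos (hvu i) (hcoord i) hδ0.le
    calc ‖v - u‖ ^ γ = (‖v - u‖ ^ δ) ^ (3:ℕ) := by
          rw [← Real.rpow_natCast (‖v - u‖ ^ δ) 3, ← Real.rpow_mul hnpos.le]
          norm_num
          rw [hδ]
          ring_nf
      _ = ∏ _i : Fin 3, ‖v - u‖ ^ δ := by
          rw [Finset.prod_const]
          norm_num
      _ ≤ ∏ i : Fin 3, g (v i - u i) :=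
          Finset.prod_le_prod (fun i _ => Real.rpow_nonneg hnpos.le _)
            (fun i _ => hfac i)
  -- integrability
  have hrad_meas : Measurable (fun u : V3 => ‖v - u‖ ^ γ) :=
    (meas_rpow_const γ).comp ((continuous_const.sub continuous_id).norm.measurable)
  have hInt : IntegrableOn (fun u : V3 => ‖v - u‖ ^ γ) {u : V3 | ‖v - u‖ ≤ 2 * ε} volume := by
    apply Integrable.mono' hhInt.integrableOn hrad_meas.aestronglyMeasurable
    filter_upwards [hdom] with u hu
    rwa [Real.norm_eq_abs, abs_of_nonneg (Real.rpow_nonneg (norm_nonneg _) _)]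
  refine ⟨hInt, ?_⟩
  calc (∫ u in {u : V3 | ‖v - u‖ ≤ 2 * ε}, ‖v - u‖ ^ γ)
      ≤ ∫ u in {u : V3 | ‖v - u‖ ≤ 2 * ε}, h u :=
        integral_mono_of_nonneg
          (Filter.Eventually.of_forall (fun u => Real.rpow_nonneg (norm_nonneg _) _))
          hhInt.integrableOn hdom
    _ ≤ ∫ u, h u :=
        setIntegral_le_integral hhInt
          (Filter.Eventually.of_forall (fun u => Finset.prod_nonneg (fun i _ => hg0 _)))
    _ = (2 * R ^ (δ + 1) / (δ + 1)) ^ 3 := by rw [hhVal, hgVal]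
    _ = (2 * 2 ^ (δ + 1) / (δ + 1)) ^ 3 * ε ^ (γ + 3) := by
        rw [hR, Real.mul_rpow (by norm_num) hε.le]
        rw [show ε ^ (γ + 3) = (ε ^ (δ + 1)) ^ (3:ℕ) by
          rw [← Real.rpow_natCast (ε ^ (δ + 1)) 3, ← Real.rpow_mul hε.le]
          congr 1
          rw [hδ]; push_cast; ring]
        ring
end Aux3

set_option maxHeartbeats 4000000 in
/-- first estimate of Lemma 2.3: smallness of the near-singular part
`K^{1-χ}` of the linearized operator. -/
theorem stmt8_small_singular_part
    (γ q ϑ β C₀ : ℝ) (q₀ : ℝ → ℝ)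
    (hγl : -3 < γ) (hγu : γ < 0) (hβ : 0 ≤ β) (hq0 : 0 < q) (hq1 : q < 1) (hϑ : 0 ≤ ϑ)
    (hq₀meas : Measurable q₀) (hq₀ : ∀ s : ℝ, 0 ≤ q₀ s ∧ q₀ s ≤ C₀ * |s|) :
    ∃ C : ℝ, 0 < C ∧
      ∀ ε : ℝ, 0 < ε → ε < 1 → ∀ t : ℝ, 0 ≤ t → ∀ v : V3,
        ∀ f : V3 → ℝ, Measurable f → ∀ M : ℝ,
          (∀ u, |wgt q ϑ β u t * f u| ≤ M) →
          wgt q ϑ β v t *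
              (∫ u in {u : V3 | ‖v - u‖ ≤ 2 * ε}, ∫ ω : Metric.sphere (0 : V3) 1,
                Bker γ q₀ u v ↑ω * Real.sqrt (gMaxw u) *
                  (Real.sqrt (gMaxw v) * |f u|
                    + Real.sqrt (gMaxw (vPost u v ↑ω)) * |f (uPost u v ↑ω)|
                    + Real.sqrt (gMaxw (uPost u v ↑ω)) * |f (vPost u v ↑ω)|) ∂sphMeasure)
            ≤ C * gMaxw v ^ ((1 - q) / 8) * ε ^ (γ + 3) * M := by
  obtain ⟨K, hK1, hK⟩ := polyExp β hβ
  obtain ⟨c, hc, hrad⟩ := radial_bound γ hγl hγu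
  haveI : IsFiniteMeasure sphMeasure :=
    inferInstanceAs (IsFiniteMeasure (volume : Measure V3).toSphere)
  have hC₀ : 0 ≤ C₀ := by
    have h1 := (hq₀ 1).1
    have h2 := (hq₀ 1).2
    simp only [abs_one, mul_one] at h2
    linarith
  set sphtot : ℝ := (sphMeasure Set.univ).toReal with hsph
  have hsph0 : 0 ≤ sphtot := ENNReal.toReal_nonneg
  set K₄ : ℝ := (2 * π) ^ (-(3:ℝ)/2) * Real.exp 1 * K with hK₄
  have hK₄0 : 0 ≤ K₄ := by
    apply mul_nonneg (mul_nonneg (Real.rpow_nonneg (by positivity) _) (Real.exp_nonneg _))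
    linarith
  set Cb : ℝ := sphtot * (C₀ * (3 * K₄)) * c * (2 * π) ^ ((3:ℝ) * (1 - q) / 16) with hCb
  have hCb0 : 0 ≤ Cb := by
    rw [hCb]
    have h1 : (0:ℝ) ≤ (2 * π) ^ ((3:ℝ) * (1 - q) / 16) := Real.rpow_nonneg (by positivity) _
    have h2 : (0:ℝ) ≤ C₀ * (3 * K₄) := mul_nonneg hC₀ (mul_nonneg (by norm_num) hK₄0)
    exact mul_nonneg (mul_nonneg (mul_nonneg hsph0 h2) hc.le) h1
  refine ⟨Cb + 1, by linarith, ?_⟩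
  intro ε hε hε1 t ht v f hfmeas M hfM
  have hM : 0 ≤ M := le_trans (abs_nonneg _) (hfM v)
  obtain ⟨hInt, hIval⟩ := hrad v ε hε hε1.le
  have hSmeas : MeasurableSet {u : V3 | ‖v - u‖ ≤ 2 * ε} :=
    measurableSet_le ((continuous_const.sub continuous_id).norm.measurable) measurable_const
  set Ev : ℝ := Real.exp (-((1 - q) * ‖v‖ ^ 2 / 16)) with hEv
  have hEv0 : 0 ≤ Ev := Real.exp_nonneg _
  set A : ℝ := sphtot * (C₀ * (3 * (K₄ * M * Ev))) with hA
  have hA0 : 0 ≤ A := by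
    rw [hA]
    apply mul_nonneg hsph0
    apply mul_nonneg hC₀
    apply mul_nonneg (by norm_num)
    exact mul_nonneg (mul_nonneg hK₄0 hM) hEv0
  -- nonnegativity of the integrand
  have hFnn : ∀ (u : V3) (ω : Metric.sphere (0 : V3) 1),
      0 ≤ Bker γ q₀ u v ↑ω * Real.sqrt (gMaxw u) *
        (Real.sqrt (gMaxw v) * |f u|
          + Real.sqrt (gMaxw (vPost u v ↑ω)) * |f (uPost u v ↑ω)|
          + Real.sqrt (gMaxw (uPost u v ↑ω)) * |f (vPost u v ↑ω)|) := by
    intro u ω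
    have hB : 0 ≤ Bker γ q₀ u v ↑ω :=
      mul_nonneg (Real.rpow_nonneg (norm_nonneg _) _) ((hq₀ _).1)
    have hsum : 0 ≤ Real.sqrt (gMaxw v) * |f u|
          + Real.sqrt (gMaxw (vPost u v ↑ω)) * |f (uPost u v ↑ω)|
          + Real.sqrt (gMaxw (uPost u v ↑ω)) * |f (vPost u v ↑ω)| := by positivity
    exact mul_nonneg (mul_nonneg hB (Real.sqrt_nonneg _)) hsum
  -- pointwise bound
  have hptwise : ∀ u ∈ {u : V3 | ‖v - u‖ ≤ 2 * ε}, ∀ ω : Metric.sphere (0 : V3) 1,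
      wgt q ϑ β v t * (Bker γ q₀ u v ↑ω * Real.sqrt (gMaxw u) *
        (Real.sqrt (gMaxw v) * |f u|
          + Real.sqrt (gMaxw (vPost u v ↑ω)) * |f (uPost u v ↑ω)|
          + Real.sqrt (gMaxw (uPost u v ↑ω)) * |f (vPost u v ↑ω)|))
      ≤ ‖v - u‖ ^ γ * (C₀ * (3 * (K₄ * M * Ev))) := by
    intro u huS ω
    have hω : ‖(ω : V3)‖ = 1 := norm_eq_of_mem_sphere ω
    have huv2 : ‖v - u‖ ≤ 2 := le_trans huS (by linarith)
    have hE := energy_id u v ↑ω hω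
    have ht1 : wgt q ϑ β v t * (Real.sqrt (gMaxw u) * (Real.sqrt (gMaxw v) * |f u|))
        ≤ K₄ * M * Ev := by
      rw [hK₄, hEv]
      have := term_bound (x := v) (y := u) hβ hq0 hq1 hϑ hK ht (by ring) huv2 hfM
      linarith
    have ht2 : wgt q ϑ β v t *
        (Real.sqrt (gMaxw u) * (Real.sqrt (gMaxw (vPost u v ↑ω)) * |f (uPost u v ↑ω)|))
        ≤ K₄ * M * Ev := by
      rw [hK₄, hEv]
      have := term_bound (x := vPost u v ↑ω) (y := uPost u v ↑ω) hβ hq0 hq1 hϑ hK ht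
        (by linarith) huv2 hfM
      linarith
    have ht3 : wgt q ϑ β v t *
        (Real.sqrt (gMaxw u) * (Real.sqrt (gMaxw (uPost u v ↑ω)) * |f (vPost u v ↑ω)|))
        ≤ K₄ * M * Ev := by
      rw [hK₄, hEv]
      have := term_bound (x := uPost u v ↑ω) (y := vPost u v ↑ω) hβ hq0 hq1 hϑ hK ht
        (by linarith) huv2 hfM
      linarith
    have hq₀le : q₀ (cosAngle u v ↑ω) ≤ C₀ := by
      calc q₀ (cosAngle u v ↑ω) ≤ C₀ * |cosAngle u v ↑ω| := (hq₀ _).2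
        _ ≤ C₀ * 1 := mul_le_mul_of_nonneg_left (cosAngle_abs_le u v ↑ω hω) hC₀
        _ = C₀ := mul_one _
    have hrw : wgt q ϑ β v t * (Bker γ q₀ u v ↑ω * Real.sqrt (gMaxw u) *
        (Real.sqrt (gMaxw v) * |f u|
          + Real.sqrt (gMaxw (vPost u v ↑ω)) * |f (uPost u v ↑ω)|
          + Real.sqrt (gMaxw (uPost u v ↑ω)) * |f (vPost u v ↑ω)|))
        = (‖v - u‖ ^ γ * q₀ (cosAngle u v ↑ω)) *
          (wgt q ϑ β v t * (Real.sqrt (gMaxw u) * (Real.sqrt (gMaxw v) * |f u|))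
           + wgt q ϑ β v t *
              (Real.sqrt (gMaxw u) * (Real.sqrt (gMaxw (vPost u v ↑ω)) * |f (uPost u v ↑ω)|))
           + wgt q ϑ β v t *
              (Real.sqrt (gMaxw u) * (Real.sqrt (gMaxw (uPost u v ↑ω)) * |f (vPost u v ↑ω)|))) := by
      unfold Bker
      ring
    rw [hrw]
    have h0t : 0 ≤ wgt q ϑ β v t * (Real.sqrt (gMaxw u) * (Real.sqrt (gMaxw v) * |f u|))
           + wgt q ϑ β v t *
              (Real.sqrt (gMaxw u) * (Real.sqrt (gMaxw (vPost u v ↑ω)) * |f (uPost u v ↑ω)|))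
           + wgt q ϑ β v t *
              (Real.sqrt (gMaxw u) * (Real.sqrt (gMaxw (uPost u v ↑ω)) * |f (vPost u v ↑ω)|)) := by
      have hw := (wgt_pos q ϑ β v t).le
      have n1 : 0 ≤ Real.sqrt (gMaxw u) * (Real.sqrt (gMaxw v) * |f u|) := by positivity
      have n2 : 0 ≤ Real.sqrt (gMaxw u) *
          (Real.sqrt (gMaxw (vPost u v ↑ω)) * |f (uPost u v ↑ω)|) := by positivity
      have n3 : 0 ≤ Real.sqrt (gMaxw u) *
          (Real.sqrt (gMaxw (uPost u v ↑ω)) * |f (vPost u v ↑ω)|) := by positivity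
      have := mul_nonneg hw n1
      have := mul_nonneg hw n2
      have := mul_nonneg hw n3
      linarith
    calc (‖v - u‖ ^ γ * q₀ (cosAngle u v ↑ω)) * _
        ≤ (‖v - u‖ ^ γ * C₀) * (3 * (K₄ * M * Ev)) := by
          apply mul_le_mul
          · exact mul_le_mul_of_nonneg_left hq₀le (Real.rpow_nonneg (norm_nonneg _) _)
          · linarith
          · exact h0t
          · exact mul_nonneg (Real.rpow_nonneg (norm_nonneg _) _) hC₀
      _ = ‖v - u‖ ^ γ * (C₀ * (3 * (K₄ * M * Ev))) := by ring
  -- main chain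
  rw [← MeasureTheory.integral_const_mul]
  have step1 : ∀ u ∈ {u : V3 | ‖v - u‖ ≤ 2 * ε},
      wgt q ϑ β v t * (∫ ω : Metric.sphere (0 : V3) 1,
        Bker γ q₀ u v ↑ω * Real.sqrt (gMaxw u) *
          (Real.sqrt (gMaxw v) * |f u|
            + Real.sqrt (gMaxw (vPost u v ↑ω)) * |f (uPost u v ↑ω)|
            + Real.sqrt (gMaxw (uPost u v ↑ω)) * |f (vPost u v ↑ω)|) ∂sphMeasure)
      ≤ A * ‖v - u‖ ^ γ := by
    intro u huS
    rw [← MeasureTheory.integral_const_mul]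
    calc (∫ ω : Metric.sphere (0 : V3) 1, wgt q ϑ β v t *
            (Bker γ q₀ u v ↑ω * Real.sqrt (gMaxw u) *
              (Real.sqrt (gMaxw v) * |f u|
                + Real.sqrt (gMaxw (vPost u v ↑ω)) * |f (uPost u v ↑ω)|
                + Real.sqrt (gMaxw (uPost u v ↑ω)) * |f (vPost u v ↑ω)|)) ∂sphMeasure)
        ≤ ∫ _ω : Metric.sphere (0 : V3) 1,
            ‖v - u‖ ^ γ * (C₀ * (3 * (K₄ * M * Ev))) ∂sphMeasure := by
          apply integral_mono_of_nonneg
          · exact Filter.Eventually.of_forall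
              (fun ω => mul_nonneg (wgt_pos q ϑ β v t).le (hFnn u ω))
          · exact integrable_const _
          · exact Filter.Eventually.of_forall (fun ω => hptwise u huS ω)
      _ = sphtot * (‖v - u‖ ^ γ * (C₀ * (3 * (K₄ * M * Ev)))) := by
          rw [integral_const, smul_eq_mul, hsph, measureReal_def]
      _ = A * ‖v - u‖ ^ γ := by rw [hA]; ring
  calc (∫ u in {u : V3 | ‖v - u‖ ≤ 2 * ε}, wgt q ϑ β v t *
          (∫ ω : Metric.sphere (0 : V3) 1,
            Bker γ q₀ u v ↑ω * Real.sqrt (gMaxw u) *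
              (Real.sqrt (gMaxw v) * |f u|
                + Real.sqrt (gMaxw (vPost u v ↑ω)) * |f (uPost u v ↑ω)|
                + Real.sqrt (gMaxw (uPost u v ↑ω)) * |f (vPost u v ↑ω)|) ∂sphMeasure))
      ≤ ∫ u in {u : V3 | ‖v - u‖ ≤ 2 * ε}, A * ‖v - u‖ ^ γ := by
        apply integral_mono_of_nonneg
        · apply Filter.Eventually.of_forall
          intro u
          exact mul_nonneg (wgt_pos q ϑ β v t).le
            (integral_nonneg (fun ω => hFnn u ω))
        · exact hInt.const_mul A
        · exact (ae_restrict_iff' hSmeas).mpr (Filter.Eventually.of_forall step1)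
    _ = A * ∫ u in {u : V3 | ‖v - u‖ ≤ 2 * ε}, ‖v - u‖ ^ γ :=
        MeasureTheory.integral_const_mul A _
    _ ≤ A * (c * ε ^ (γ + 3)) := mul_le_mul_of_nonneg_left hIval hA0
    _ ≤ (Cb + 1) * gMaxw v ^ ((1 - q) / 8) * ε ^ (γ + 3) * M := by
        have hEvEq : (2 * π) ^ ((3:ℝ) * (1 - q) / 16) * gMaxw v ^ ((1 - q) / 8) = Ev := by
          rw [hEv]
          unfold gMaxw
          rw [Real.mul_rpow (by positivity) (Real.exp_nonneg _),
            ← Real.rpow_mul (by positivity), ← Real.exp_mul, ← mul_assoc,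
            ← Real.rpow_add (by positivity),
            show (3:ℝ) * (1 - q) / 16 + -(3:ℝ) / 2 * ((1 - q) / 8) = 0 by ring,
            Real.rpow_zero, one_mul]
          congr 1
          ring
        have hG0 : 0 ≤ gMaxw v ^ ((1 - q) / 8) := by
          apply Real.rpow_nonneg
          unfold gMaxw
          positivity
        have hX0 : 0 ≤ gMaxw v ^ ((1 - q) / 8) * (ε ^ (γ + 3) * M) :=
          mul_nonneg hG0 (mul_nonneg (Real.rpow_nonneg hε.le _) hM)
        calc A * (c * ε ^ (γ + 3))
            = Cb * (gMaxw v ^ ((1 - q) / 8) * (ε ^ (γ + 3) * M)) := by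
              rw [hA, hCb, hK₄, ← hEvEq]
              ring
          _ ≤ (Cb + 1) * (gMaxw v ^ ((1 - q) / 8) * (ε ^ (γ + 3) * M)) :=
              mul_le_mul_of_nonneg_right (by linarith) hX0
          _ = (Cb + 1) * gMaxw v ^ ((1 - q) / 8) * ε ^ (γ + 3) * M := by ring
end
end

section
/- Weighted integral estimate for the cut-off gain kernel (core of the second estimate of Lemma 2.3): Let -3 < γ < 0, β ≥ 0, ϑ ≥ 0 and 0 < q < s₀ < 1. There exists ε₀ > 0 such that for every ε ∈ (0, ε₀] there is a constant C > 0 with, for all t ≥ 0 and all v ∈ ℝ³: w_{q,ϑ,β}(v,t) ∫_{ℝ³} |v-u|^{-1} exp(-(s₀/8)|v-u|² - (s₀/8)(|v|²-|u|²)²/|v-u|²) e^{ε|v-u|²} (w_{q,ϑ,β}(u,t))^{-1} du ≤ C (1+|v|)^{-1}. -/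
noncomputable section

open MeasureTheory Real
open scoped ENNReal

set_option maxHeartbeats 2000000

namespace Stmt9Aux

open Set

/-! ### Elementary growth estimates -/

lemma poly_growth (β c : ℝ) (hβ : 0 ≤ β) (hc : 0 < c) :
    ∃ M : ℝ, 0 < M ∧ ∀ s : ℝ, 0 ≤ s → (1+s)^β ≤ M * exp (c*s) := by
  refine ⟨(max 1 (β/c))^β, Real.rpow_pos_of_pos (lt_of_lt_of_le one_pos (le_max_left _ _)) _,
    fun s hs => ?_⟩
  set k := max 1 (β/c) with hk
  have hk1 : (1:ℝ) ≤ k := le_max_left _ _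
  have hk0 : (0:ℝ) < k := by linarith
  have h1 : 1 + s ≤ k * exp (s/k) := by
    have := Real.add_one_le_exp (s/k)
    have h2 : k * (s/k + 1) ≤ k * exp (s/k) := by nlinarith
    calc 1 + s = k * (s/k + 1) - (k - 1) := by field_simp; ring
    _ ≤ k * exp (s/k) := by linarith
  calc (1+s)^β ≤ (k * exp (s/k))^β := by
        apply Real.rpow_le_rpow (by linarith) h1 hβ
  _ = k^β * (exp (s/k))^β := Real.mul_rpow hk0.le (exp_nonneg _)
  _ = k^β * exp (s/k*β) := by rw [← Real.exp_mul]
  _ ≤ k^β * exp (c*s) := by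
        have : s/k*β ≤ c*s := by
          rw [div_mul_eq_mul_div, mul_comm]
          rw [div_le_iff₀ hk0]
          have : β ≤ c * k := by
            have := le_max_right 1 (β/c); rw [← hk] at this
            calc β = c * (β/c) := by field_simp
            _ ≤ c * k := by nlinarith
          nlinarith
        have := Real.exp_le_exp.2 this
        nlinarith [Real.rpow_nonneg hk0.le β, Real.exp_pos (s/k*β)]

/-! ### One-dimensional integrals -/

lemma integrable_exp_neg_mul_abs {b : ℝ} (hb : 0 < b) :
    Integrable (fun x : ℝ => exp (-(b*|x|))) := by
  have hIoi : IntegrableOn (fun x : ℝ => exp (-(b*|x|))) (Ioi 0) := by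
    refine (exp_neg_integrableOn_Ioi 0 hb).congr_fun (fun x hx => ?_) measurableSet_Ioi
    rw [abs_of_pos hx]; ring_nf
  rw [← integrableOn_univ, ← Iic_union_Ioi (a := (0:ℝ)), integrableOn_union]
  refine ⟨?_, hIoi⟩
  rw [← (Measure.measurePreserving_neg (volume : Measure ℝ)).integrableOn_comp_preimage
      (Homeomorph.neg ℝ).measurableEmbedding]
  simp only [Function.comp_def, abs_neg, neg_preimage, neg_Iic, neg_zero]
  exact (integrableOn_Ici_iff_integrableOn_Ioi).mpr hIoi

lemma integral_exp_neg_mul_abs {b : ℝ} (hb : 0 < b) :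
    ∫ x : ℝ, exp (-(b*|x|)) = 2/b := by
  have h1 : ∫ x : ℝ, exp (-(b*|x|)) = 2 * ∫ x in Ioi (0:ℝ), exp (-(b*x)) :=
    integral_comp_abs (f := fun x => exp (-(b*x)))
  have h2 : ∫ x in Ioi (0:ℝ), exp (-(b*x)) = b⁻¹ := by
    have := integral_comp_mul_left_Ioi (fun x => exp (-x)) 0 hb
    simp only [mul_zero] at this
    calc ∫ x in Ioi (0:ℝ), exp (-(b*x)) = b⁻¹ • ∫ x in Ioi (0:ℝ), exp (-x) := this
    _ = b⁻¹ := by rw [integral_exp_neg_Ioi]; simp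
  rw [h1, h2]; ring

lemma integrable_g {c : ℝ} (hc : 0 < c) :
    Integrable (fun y : ℝ => (y^2)^(-(1:ℝ)/4) * exp (-(c*y^2))) := by
  have hIoi : IntegrableOn (fun y : ℝ => (y^2)^(-(1:ℝ)/4) * exp (-(c*y^2))) (Ioi 0) := by
    have := integrableOn_rpow_mul_exp_neg_mul_sq hc (s := -(1:ℝ)/2) (by norm_num)
    refine this.congr_fun (fun y hy => ?_) measurableSet_Ioi
    have hy0 : (0:ℝ) < y := hy
    rw [show (y:ℝ)^2 = y ^ ((2:ℕ):ℝ) by rw [Real.rpow_natCast], ← Real.rpow_mul hy0.le]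
    norm_num
  rw [← integrableOn_univ, ← Iic_union_Ioi (a := (0:ℝ)), integrableOn_union]
  refine ⟨?_, hIoi⟩
  rw [← (Measure.measurePreserving_neg (volume : Measure ℝ)).integrableOn_comp_preimage
      (Homeomorph.neg ℝ).measurableEmbedding]
  simp only [Function.comp_def, neg_sq, neg_preimage, neg_Iic, neg_zero]
  exact (integrableOn_Ici_iff_integrableOn_Ioi).mpr hIoi

/-! ### Two-dimensional integral -/

lemma sqrt_dom {a b : ℝ} (ha : a ≠ 0) (hb : b ≠ 0) :
    (Real.sqrt (a^2 + b^2))⁻¹ ≤ (a^2)^(-(1:ℝ)/4) * (b^2)^(-(1:ℝ)/4) := by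
  have h1 : (0:ℝ) < |a| * |b| := by positivity
  have key : Real.sqrt (|a| * |b|) ≤ Real.sqrt (a^2 + b^2) := by
    apply Real.sqrt_le_sqrt; nlinarith [sq_nonneg (|a| - |b|), sq_abs a, sq_abs b]
  have hpos : (0:ℝ) < Real.sqrt (|a| * |b|) := Real.sqrt_pos.2 h1
  have h2 : (Real.sqrt (a^2+b^2))⁻¹ ≤ (Real.sqrt (|a| * |b|))⁻¹ :=
    inv_anti₀ hpos key
  refine h2.trans_eq ?_
  have ha2 : (a^2 : ℝ)^(-(1:ℝ)/4) = (|a| ^ ((1:ℝ)/2))⁻¹ := by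
    rw [← sq_abs a, show ((|a|:ℝ)^2) = |a| ^ ((2:ℕ):ℝ) by rw [Real.rpow_natCast],
      ← Real.rpow_mul (abs_nonneg a), ← Real.rpow_neg (abs_nonneg a)]
    norm_num
  have hb2 : (b^2 : ℝ)^(-(1:ℝ)/4) = (|b| ^ ((1:ℝ)/2))⁻¹ := by
    rw [← sq_abs b, show ((|b|:ℝ)^2) = |b| ^ ((2:ℕ):ℝ) by rw [Real.rpow_natCast],
      ← Real.rpow_mul (abs_nonneg b), ← Real.rpow_neg (abs_nonneg b)]
    norm_num
  rw [ha2, hb2, ← mul_inv, ← Real.mul_rpow (abs_nonneg a) (abs_nonneg b),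
    ← Real.sqrt_eq_rpow]

lemma integrable_G {c : ℝ} (hc : 0 < c) :
    Integrable (fun z : Fin 2 → ℝ =>
      (Real.sqrt (∑ j, (z j)^2))⁻¹ * exp (-(c * ∑ j, (z j)^2))) := by
  have hmeas : Measurable (fun z : Fin 2 → ℝ =>
      (Real.sqrt (∑ j, (z j)^2))⁻¹ * exp (-(c * ∑ j, (z j)^2))) := by
    have hsum : Measurable (fun z : Fin 2 → ℝ => ∑ j, (z j)^2) := by
      apply Finset.measurable_sum
      exact fun i _ => ((measurable_pi_apply i).pow measurable_const)
    exact ((Real.continuous_sqrt.measurable.comp hsum).inv).mul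
      ((hsum.const_mul c).neg.exp)
  have hdom : Integrable (fun z : Fin 2 → ℝ =>
      ∏ j, ((z j)^2)^(-(1:ℝ)/4) * exp (-(c*(z j)^2))) :=
    Integrable.fintype_prod (f := fun _ y => (y^2)^(-(1:ℝ)/4) * exp (-(c*y^2)))
      (fun _ => integrable_g hc)
  refine hdom.mono' hmeas.aestronglyMeasurable ?_
  have h0 : ∀ᵐ z : Fin 2 → ℝ, z 0 ≠ 0 := by
    rw [volume_pi]; exact Measure.ae_eval_ne _ 0 0
  have h1 : ∀ᵐ z : Fin 2 → ℝ, z 1 ≠ 0 := by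
    rw [volume_pi]; exact Measure.ae_eval_ne _ 1 0
  filter_upwards [h0, h1] with z hz0 hz1
  rw [Real.norm_eq_abs, abs_of_nonneg (by positivity), Fin.sum_univ_two, Fin.prod_univ_two]
  have hexp : exp (-(c * ((z 0)^2 + (z 1)^2)))
      = exp (-(c*(z 0)^2)) * exp (-(c*(z 1)^2)) := by
    rw [← Real.exp_add]; ring_nf
  calc (Real.sqrt ((z 0)^2 + (z 1)^2))⁻¹ * exp (-(c * ((z 0)^2 + (z 1)^2)))
      ≤ ((z 0)^2)^(-(1:ℝ)/4) * ((z 1)^2)^(-(1:ℝ)/4) * exp (-(c * ((z 0)^2 + (z 1)^2))) := by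
        apply mul_le_mul_of_nonneg_right (sqrt_dom hz0 hz1) (exp_nonneg _)
  _ = ((z 0)^2)^(-(1:ℝ)/4) * exp (-(c*(z 0)^2)) * (((z 1)^2)^(-(1:ℝ)/4) * exp (-(c*(z 1)^2))) := by
        rw [hexp]; ring

/-! ### A basis aligned with a given vector -/

lemma exists_aligned_basis (v : V3) :
    ∃ b : OrthonormalBasis (Fin 3) ℝ V3, ∀ η : V3, (inner ℝ v η : ℝ) = ‖v‖ * b.repr η 0 := by
  by_cases hv : v = 0
  · refine ⟨EuclideanSpace.basisFun (Fin 3) ℝ, fun η => ?_⟩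
    simp [hv]
  · have hvn : ‖v‖ ≠ 0 := norm_ne_zero_iff.2 hv
    set w : Fin 3 → V3 := fun _ => ‖v‖⁻¹ • v with hw
    have horth : Orthonormal ℝ (({0} : Set (Fin 3)).restrict w) := by
      constructor
      · rintro ⟨i, hi⟩
        simp only [Set.restrict_apply, hw]
        show ‖‖v‖⁻¹ • v‖ = 1
        rw [norm_smul, norm_inv, norm_norm, inv_mul_cancel₀ hvn]
      · rintro ⟨i, hi⟩ ⟨j, hj⟩ hij
        exact absurd (Subtype.ext ((hi.trans hj.symm : (i:Fin 3) = j) ▸ rfl : (i:Fin 3) = j)) hij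
    obtain ⟨b, hb⟩ := horth.exists_orthonormalBasis_extension_of_card_eq
      (by simp [finrank_euclideanSpace])
    refine ⟨b, fun η => ?_⟩
    have hb0 : b 0 = ‖v‖⁻¹ • v := hb 0 rfl
    have hrepr : b.repr η 0 = (inner ℝ (b 0) η : ℝ) := b.repr_apply_apply η 0
    rw [hrepr, hb0, real_inner_smul_left]
    field_simp

/-! ### The three-dimensional weighted integral -/

lemma core_D {c₁ c₂ : ℝ} (hc₁ : 0 < c₁) (hc₂ : 0 < c₂) (v : V3) :
    Integrable (fun η : V3 => ‖η‖⁻¹ * exp (-(c₁ * ‖η‖^2) - c₂ * |(inner ℝ v η : ℝ)|)) ∧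
    ∫ η : V3, ‖η‖⁻¹ * exp (-(c₁ * ‖η‖^2) - c₂ * |(inner ℝ v η : ℝ)|)
      ≤ (∫ a : ℝ, exp (-(c₁*a^2) - c₂*‖v‖*|a|)) *
        (∫ z : Fin 2 → ℝ, (Real.sqrt (∑ j, (z j)^2))⁻¹ * exp (-(c₁ * ∑ j, (z j)^2))) := by
  obtain ⟨b, hbP⟩ := exists_aligned_basis v
  set DD : V3 → ℝ := fun η => ‖η‖⁻¹ * exp (-(c₁ * ‖η‖^2) - c₂ * |(inner ℝ v η : ℝ)|) with hDD
  set F : ℝ → ℝ := fun a => exp (-(c₁*a^2) - c₂*‖v‖*|a|) with hF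
  set G : (Fin 2 → ℝ) → ℝ :=
    fun z => (Real.sqrt (∑ j, (z j)^2))⁻¹ * exp (-(c₁ * ∑ j, (z j)^2)) with hG
  set H2 : ℝ × (Fin 2 → ℝ) → ℝ := fun p =>
    (Real.sqrt (p.1^2 + ∑ j, (p.2 j)^2))⁻¹ *
      exp (-(c₁ * (p.1^2 + ∑ j, (p.2 j)^2)) - c₂*‖v‖*|p.1|) with hH2
  set ψ : V3 → ℝ × (Fin 2 → ℝ) :=
    fun η => (b.repr η 0, fun j => b.repr η ((0:Fin 3).succAbove j)) with hψ
  have h1 := b.measurePreserving_measurableEquiv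
  have h2 := EuclideanSpace.volume_preserving_symm_measurableEquiv_toLp (Fin 3)
  have h3 := volume_preserving_piFinSuccAbove (fun _ : Fin 3 => ℝ) 0
  have hψm : MeasurePreserving ψ volume
      ((volume : Measure ℝ).prod (volume : Measure (Fin 2 → ℝ))) := by
    have := (h3.comp h2).comp h1
    exact this
  have hemb : MeasurableEmbedding ψ := by
    have := ((MeasurableEquiv.piFinSuccAbove (fun _ : Fin 3 => ℝ) 0).measurableEmbedding.comp
      ((MeasurableEquiv.toLp 2 (Fin 3 → ℝ)).symm.measurableEmbedding.comp
        b.measurableEquiv.measurableEmbedding))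
    exact this
  have hkey : ∀ η : V3, DD η = H2 (ψ η) := by
    intro η
    have hsum : ∑ i, (b.repr η i)^2 = ‖η‖^2 := by
      have h4 : ‖b.repr η‖ = ‖η‖ := b.repr.norm_map η
      have h5 : ‖b.repr η‖ = Real.sqrt (∑ i, ‖b.repr η i‖^2) := EuclideanSpace.norm_eq _
      have h6 : ‖η‖^2 = ∑ i, ‖b.repr η i‖^2 := by
        rw [← h4, h5, Real.sq_sqrt]
        positivity
      rw [h6]
      congr 1; funext i; rw [Real.norm_eq_abs, sq_abs]
    have hsplit : (b.repr η 0)^2 + ∑ j, (b.repr η ((0:Fin 3).succAbove j))^2 = ‖η‖^2 := by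
      rw [← hsum, Fin.sum_univ_succAbove (fun i => (b.repr η i)^2) 0]
    have habs : |(inner ℝ v η : ℝ)| = ‖v‖ * |b.repr η 0| := by
      rw [hbP η, abs_mul, abs_norm]
    simp only [hDD, hH2, hψ]
    rw [hsplit, habs, Real.sqrt_sq (norm_nonneg η)]
    ring
  have hnull : ((volume : Measure ℝ).prod (volume : Measure (Fin 2 → ℝ)))
      {p : ℝ × (Fin 2 → ℝ) | p.2 0 = 0} = 0 := by
    have hset : {p : ℝ × (Fin 2 → ℝ) | p.2 0 = 0} = univ ×ˢ {z : Fin 2 → ℝ | z 0 = 0} := by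
      ext p; simp [Set.mem_prod]
    rw [hset, Measure.prod_prod]
    have : (volume : Measure (Fin 2 → ℝ)) {z : Fin 2 → ℝ | z 0 = 0} = 0 := by
      rw [volume_pi]
      exact Measure.pi_hyperplane _ 0 0
    rw [this, mul_zero]
  have hae : ∀ᵐ p ∂((volume : Measure ℝ).prod (volume : Measure (Fin 2 → ℝ))), p.2 0 ≠ 0 := by
    rw [ae_iff]
    simpa using hnull
  have hbound : ∀ p : ℝ × (Fin 2 → ℝ), p.2 0 ≠ 0 → H2 p ≤ F p.1 * G p.2 := by
    rintro ⟨a, z⟩ hz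
    have hS : 0 < ∑ j, (z j)^2 := by
      have : (z 0)^2 ≤ ∑ j, (z j)^2 :=
        Finset.single_le_sum (f := fun j => (z j)^2) (fun j _ => sq_nonneg _) (Finset.mem_univ 0)
      nlinarith [sq_nonneg (z 0), sq_pos_of_ne_zero hz]
    have hsq : Real.sqrt (∑ j, (z j)^2) ≤ Real.sqrt (a^2 + ∑ j, (z j)^2) := by
      apply Real.sqrt_le_sqrt; nlinarith [sq_nonneg a]
    have hinv : (Real.sqrt (a^2 + ∑ j, (z j)^2))⁻¹ ≤ (Real.sqrt (∑ j, (z j)^2))⁻¹ :=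
      inv_anti₀ (Real.sqrt_pos.2 hS) hsq
    have hexp : exp (-(c₁ * (a^2 + ∑ j, (z j)^2)) - c₂*‖v‖*|a|)
        = exp (-(c₁*a^2) - c₂*‖v‖*|a|) * exp (-(c₁ * ∑ j, (z j)^2)) := by
      rw [← Real.exp_add]; ring_nf
    simp only [hH2, hF, hG]
    rw [hexp]
    calc (Real.sqrt (a^2 + ∑ j, (z j)^2))⁻¹
          * (exp (-(c₁*a^2) - c₂*‖v‖*|a|) * exp (-(c₁ * ∑ j, (z j)^2)))
        ≤ (Real.sqrt (∑ j, (z j)^2))⁻¹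
          * (exp (-(c₁*a^2) - c₂*‖v‖*|a|) * exp (-(c₁ * ∑ j, (z j)^2))) := by
          apply mul_le_mul_of_nonneg_right hinv (by positivity)
    _ = exp (-(c₁*a^2) - c₂*‖v‖*|a|)
          * ((Real.sqrt (∑ j, (z j)^2))⁻¹ * exp (-(c₁ * ∑ j, (z j)^2))) := by ring
  have hFcont : Continuous F := by
    apply Real.continuous_exp.comp
    exact (continuous_const.mul (continuous_pow 2)).neg.sub
      (continuous_const.mul continuous_abs)
  have intF : Integrable F := by
    refine (integrable_exp_neg_mul_sq hc₁).mono' hFcont.aestronglyMeasurable ?_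
    filter_upwards with a
    rw [Real.norm_eq_abs, abs_of_nonneg (exp_nonneg _)]
    apply Real.exp_le_exp.2
    nlinarith [mul_nonneg (mul_nonneg hc₂.le (norm_nonneg v)) (abs_nonneg a)]
  have intG := integrable_G hc₁
  have intFG : Integrable (fun p : ℝ × (Fin 2 → ℝ) => F p.1 * G p.2)
      ((volume : Measure ℝ).prod (volume : Measure (Fin 2 → ℝ))) := intF.mul_prod intG
  have hmeasH2 : Measurable H2 := by
    have hsum2 : Measurable (fun p : ℝ × (Fin 2 → ℝ) => p.1^2 + ∑ j, (p.2 j)^2) := by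
      apply Measurable.add
      · exact (measurable_fst.pow measurable_const)
      · apply Finset.measurable_sum
        exact fun i _ => ((measurable_pi_apply i).comp measurable_snd).pow measurable_const
    exact ((Real.continuous_sqrt.measurable.comp hsum2).inv).mul
      (((hsum2.const_mul c₁).neg.sub ((measurable_fst.abs).const_mul _)).exp)
  have intH2 : Integrable H2 ((volume : Measure ℝ).prod (volume : Measure (Fin 2 → ℝ))) := by
    refine intFG.mono' hmeasH2.aestronglyMeasurable ?_
    filter_upwards [hae] with p hp
    rw [Real.norm_eq_abs, abs_of_nonneg (by positivity)]
    exact hbound p hp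
  have hDDeq : DD = H2 ∘ ψ := funext hkey
  constructor
  · rw [show DD = H2 ∘ ψ from hDDeq]
    exact (hψm.integrable_comp_emb hemb).2 intH2
  · have h7 : ∫ η, DD η
        = ∫ p, H2 p ∂((volume : Measure ℝ).prod (volume : Measure (Fin 2 → ℝ))) := by
      rw [hDDeq]
      exact hψm.integral_comp hemb H2
    have h8 : ∫ p, H2 p ∂((volume : Measure ℝ).prod (volume : Measure (Fin 2 → ℝ)))
        ≤ ∫ p, F p.1 * G p.2 ∂((volume : Measure ℝ).prod (volume : Measure (Fin 2 → ℝ))) := by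
      refine integral_mono_of_nonneg ?_ intFG ?_
      · filter_upwards with p
        simp only [hH2]; positivity
      · filter_upwards [hae] with p hp
        exact hbound p hp
    have h9 : ∫ p, F p.1 * G p.2 ∂((volume : Measure ℝ).prod (volume : Measure (Fin 2 → ℝ)))
        = (∫ a, F a) * (∫ z, G z) := integral_prod_mul F G
    calc ∫ η, DD η ≤ (∫ a, F a) * (∫ z, G z) := by rw [h7]; rw [h9] at h8; exact h8
    _ = _ := by rw [hF, hG]

lemma integral_D_bound {c₁ c₂ : ℝ} (hc₁ : 0 < c₁) (hc₂ : 0 < c₂) :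
    ∃ K : ℝ, 0 < K ∧ ∀ v : V3,
      Integrable (fun u : V3 => ‖v - u‖⁻¹ * exp (-(c₁ * ‖v-u‖^2) - c₂ * |(inner ℝ v (v-u) : ℝ)|)) ∧
      ∫ u : V3, ‖v - u‖⁻¹ * exp (-(c₁ * ‖v-u‖^2) - c₂ * |(inner ℝ v (v-u) : ℝ)|)
        ≤ K / (1 + ‖v‖) := by
  set B : ℝ := ∫ z : Fin 2 → ℝ, (Real.sqrt (∑ j, (z j)^2))⁻¹ * exp (-(c₁ * ∑ j, (z j)^2)) with hB
  set A₀ : ℝ := ∫ a : ℝ, exp (-c₁*a^2) with hA₀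
  have hBnn : 0 ≤ B := integral_nonneg (fun z => by positivity)
  have hA₀nn : 0 ≤ A₀ := integral_nonneg (fun a => by positivity)
  refine ⟨A₀ * B + (2/c₂) * B + 1, by positivity, fun v => ?_⟩
  have hmp : MeasurePreserving (fun u : V3 => v - u) volume volume :=
    Measure.measurePreserving_sub_left volume v
  have hembs : MeasurableEmbedding (fun u : V3 => v - u) :=
    (MeasurableEquiv.subLeft v).measurableEmbedding
  obtain ⟨intD, hD⟩ := core_D hc₁ hc₂ v
  have hcomp : (fun u : V3 => ‖v - u‖⁻¹ * exp (-(c₁ * ‖v-u‖^2) - c₂ * |(inner ℝ v (v-u) : ℝ)|))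
      = (fun η : V3 => ‖η‖⁻¹ * exp (-(c₁ * ‖η‖^2) - c₂ * |(inner ℝ v η : ℝ)|)) ∘ (fun u => v - u) :=
    rfl
  have int2 : Integrable (fun u : V3 =>
      ‖v - u‖⁻¹ * exp (-(c₁ * ‖v-u‖^2) - c₂ * |(inner ℝ v (v-u) : ℝ)|)) := by
    rw [hcomp]
    exact (hmp.integrable_comp_emb hembs).2 intD
  refine ⟨int2, ?_⟩
  have hieq : ∫ u : V3, ‖v - u‖⁻¹ * exp (-(c₁ * ‖v-u‖^2) - c₂ * |(inner ℝ v (v-u) : ℝ)|)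
      = ∫ η : V3, ‖η‖⁻¹ * exp (-(c₁ * ‖η‖^2) - c₂ * |(inner ℝ v η : ℝ)|) := by
    exact hmp.integral_comp hembs
      (fun η : V3 => ‖η‖⁻¹ * exp (-(c₁ * ‖η‖^2) - c₂ * |(inner ℝ v η : ℝ)|))
  set F : ℝ → ℝ := fun a => exp (-(c₁*a^2) - c₂*‖v‖*|a|) with hF
  have hFcont : Continuous F := by
    apply Real.continuous_exp.comp
    exact (continuous_const.mul (continuous_pow 2)).neg.sub
      (continuous_const.mul continuous_abs)
  have intF : Integrable F := by
    refine (integrable_exp_neg_mul_sq hc₁).mono' hFcont.aestronglyMeasurable ?_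
    filter_upwards with a
    rw [Real.norm_eq_abs, abs_of_nonneg (exp_nonneg _)]
    apply Real.exp_le_exp.2
    nlinarith [mul_nonneg (mul_nonneg hc₂.le (norm_nonneg v)) (abs_nonneg a)]
  have hFnn : 0 ≤ ∫ a, F a := integral_nonneg (fun a => exp_nonneg _)
  have hFle : ∫ a, F a ≤ A₀ := by
    rw [hA₀]
    refine integral_mono intF (integrable_exp_neg_mul_sq hc₁) (fun a => ?_)
    apply Real.exp_le_exp.2
    nlinarith [mul_nonneg (mul_nonneg hc₂.le (norm_nonneg v)) (abs_nonneg a)]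
  have hVF : ‖v‖ * ∫ a, F a ≤ 2/c₂ := by
    rcases eq_or_lt_of_le (norm_nonneg v) with hv | hv
    · rw [← hv, zero_mul]; positivity
    · have hbv : 0 < c₂ * ‖v‖ := by positivity
      have h1 : ∫ a, F a ≤ 2/(c₂ * ‖v‖) := by
        rw [← integral_exp_neg_mul_abs hbv]
        refine integral_mono intF (integrable_exp_neg_mul_abs hbv) (fun a => ?_)
        apply Real.exp_le_exp.2
        nlinarith [mul_nonneg hc₁.le (sq_nonneg a)]
      calc ‖v‖ * ∫ a, F a ≤ ‖v‖ * (2/(c₂ * ‖v‖)) := by nlinarith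
      _ = 2/c₂ := by field_simp
  have hDb : ∫ η : V3, ‖η‖⁻¹ * exp (-(c₁ * ‖η‖^2) - c₂ * |(inner ℝ v η : ℝ)|)
      ≤ (∫ a, F a) * B := hD
  have hDnn : 0 ≤ ∫ η : V3, ‖η‖⁻¹ * exp (-(c₁ * ‖η‖^2) - c₂ * |(inner ℝ v η : ℝ)|) :=
    integral_nonneg (fun η => by positivity)
  rw [hieq]
  rw [div_eq_mul_inv, ← div_eq_mul_inv, le_div_iff₀ (by positivity : (0:ℝ) < 1 + ‖v‖)]
  have expand : (∫ η : V3, ‖η‖⁻¹ * exp (-(c₁ * ‖η‖^2) - c₂ * |(inner ℝ v η : ℝ)|)) * (1 + ‖v‖)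
      = (∫ η : V3, ‖η‖⁻¹ * exp (-(c₁ * ‖η‖^2) - c₂ * |(inner ℝ v η : ℝ)|))
        + ‖v‖ * (∫ η : V3, ‖η‖⁻¹ * exp (-(c₁ * ‖η‖^2) - c₂ * |(inner ℝ v η : ℝ)|)) := by ring
  rw [expand]
  have h2 : ‖v‖ * (∫ η : V3, ‖η‖⁻¹ * exp (-(c₁ * ‖η‖^2) - c₂ * |(inner ℝ v η : ℝ)|))
      ≤ (2/c₂) * B := by
    calc ‖v‖ * (∫ η : V3, ‖η‖⁻¹ * exp (-(c₁ * ‖η‖^2) - c₂ * |(inner ℝ v η : ℝ)|))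
        ≤ ‖v‖ * ((∫ a, F a) * B) := by
          apply mul_le_mul_of_nonneg_left hDb (norm_nonneg v)
    _ = (‖v‖ * ∫ a, F a) * B := by ring
    _ ≤ (2/c₂) * B := mul_le_mul_of_nonneg_right hVF hBnn
  have h1 : (∫ η : V3, ‖η‖⁻¹ * exp (-(c₁ * ‖η‖^2) - c₂ * |(inner ℝ v η : ℝ)|)) ≤ A₀ * B := by
    calc (∫ η : V3, ‖η‖⁻¹ * exp (-(c₁ * ‖η‖^2) - c₂ * |(inner ℝ v η : ℝ)|))
        ≤ (∫ a, F a) * B := hDb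
    _ ≤ A₀ * B := mul_le_mul_of_nonneg_right hFle hBnn
  linarith

/-! ### Pointwise bound on the integrand -/

lemma exponent_ineq (q s₀ a ε δ r d p : ℝ) (hq0 : 0 < q) (hqs : q < s₀)
    (ha1 : 1 ≤ a) (ha2 : a ≤ 2) (hδ : δ = (s₀ - q)/8) (hε0 : 0 < ε) (hεle : ε ≤ δ/4)
    (hr : 0 < r) (hd : d = 2*p - r^2) :
    q/8*a*d + (-(s₀/8) * r^2 - s₀/8 * d^2 / r^2) + ε*r^2
      ≤ -(δ/8) * r^2 - δ/2*|p| - δ/16*r^2 := by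
  have hδ0 : 0 < δ := by rw [hδ]; linarith
  have hr2 : (0:ℝ) < r^2 := by positivity
  have step1 : q/8*a*d ≤ q/4*|d| := by
    rcases le_or_gt 0 d with h | h
    · rw [abs_of_nonneg h]
      nlinarith [mul_nonneg (mul_nonneg hq0.le h) (sub_nonneg.2 ha2)]
    · rw [abs_of_neg h]
      nlinarith [mul_nonneg (mul_nonneg hq0.le (neg_nonneg.2 h.le)) (sub_nonneg.2 ha1)]
  have step2 : q/4*|d| + (-(s₀/8) * r^2 - s₀/8 * d^2 / r^2) + ε*r^2
      ≤ -δ*(p^2/r^2) - δ/4*r^2 := by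
    rw [← sub_nonneg]
    have key : (-δ*(p^2/r^2) - δ/4*r^2
          - (q/4*|d| + (-(s₀/8) * r^2 - s₀/8 * d^2 / r^2) + ε*r^2)) * r^2
        = -δ*p^2 - δ/4*r^2*r^2 - q/4*|d| * r^2 + s₀/8*r^2*r^2 + s₀/8*d^2 - ε*r^2*r^2 := by
      field_simp
      ring
    have hsq : (d + r^2)^2 ≤ (|d| + r^2)^2 := by
      nlinarith [le_abs_self d, neg_abs_le d, sq_abs d, hr2.le, abs_nonneg d]
    have hp2 : 4*p^2 = (d + r^2)^2 := by rw [hd]; ring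
    have main : 0 ≤ -δ*p^2 - δ/4*r^2*r^2 - q/4*|d| * r^2 + s₀/8*r^2*r^2 + s₀/8*d^2
        - ε*r^2*r^2 := by
      nlinarith [sq_nonneg (|d| - r^2), sq_abs d, abs_nonneg d, hr2.le,
        mul_nonneg (sub_nonneg.2 hεle) (mul_nonneg hr2.le hr2.le),
        mul_nonneg (sub_nonneg.2 hqs.le) (sq_nonneg (|d| - r^2)),
        mul_nonneg (sub_nonneg.2 hqs.le) (sq_nonneg (|d| + r^2))]
    have := main
    rw [← key] at this
    exact (mul_nonneg_iff_of_pos_right hr2).1 this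
  have step3 : -δ*(p^2/r^2) - δ/4*r^2 ≤ -(δ/8) * r^2 - δ/2*|p| - δ/16*r^2 := by
    rw [← sub_nonneg]
    have key : (-(δ/8) * r^2 - δ/2*|p| - δ/16*r^2 - (-δ*(p^2/r^2) - δ/4*r^2)) * r^2
        = δ*p^2 + δ/16*r^2*r^2 - δ/2*|p| * r^2 := by
      field_simp
      ring
    have main : 0 ≤ δ*p^2 + δ/16*r^2*r^2 - δ/2*|p| * r^2 := by
      nlinarith [mul_nonneg hδ0.le (sq_nonneg (|p| - r^2/4)), sq_abs p]
    have := main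
    rw [← key] at this
    exact (mul_nonneg_iff_of_pos_right hr2).1 this
  linarith

lemma wgt_pos (q ϑ β : ℝ) (v : V3) (t : ℝ) : 0 < wgt q ϑ β v t := by
  unfold wgt
  have h1 : (0:ℝ) < 1 + ‖v‖^2 := by positivity
  positivity

lemma pointwise_bound (β ϑ q s₀ : ℝ) (hβ : 0 ≤ β) (hϑ : 0 ≤ ϑ) (hq0 : 0 < q) (hqs : q < s₀)
    (δ : ℝ) (hδ : δ = (s₀ - q)/8) {ε : ℝ} (hε0 : 0 < ε) (hεle : ε ≤ δ/4)
    (M : ℝ) (hM0 : 0 < M) (hM : ∀ s, 0 ≤ s → (1+s)^β ≤ M * exp (δ/16 * s))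
    (t : ℝ) (ht : 0 ≤ t) (v u : V3) :
    wgt q ϑ β v t * (‖v - u‖⁻¹
        * Real.exp (-(s₀ / 8) * ‖v - u‖ ^ 2 - s₀ / 8 * (‖v‖ ^ 2 - ‖u‖ ^ 2) ^ 2 / ‖v - u‖ ^ 2)
        * Real.exp (ε * ‖v - u‖ ^ 2) * (wgt q ϑ β u t)⁻¹)
      ≤ ((2:ℝ)^β * M) *
        (‖v - u‖⁻¹ * exp (-(δ/8 * ‖v - u‖^2) - δ/2 * |(inner ℝ v (v-u) : ℝ)|)) := by
  have hδ0 : 0 < δ := by rw [hδ]; linarith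
  by_cases huv : v - u = 0
  · rw [huv]
    simp only [norm_zero, inv_zero, zero_mul, mul_zero, zero_mul]
    positivity
  · set r : ℝ := ‖v - u‖ with hr'
    have hr : 0 < r := by rw [hr']; exact norm_pos_iff.2 huv
    set a : ℝ := 1 + (1 + t) ^ (-ϑ) with ha'
    have ha1 : 1 ≤ a := by
      rw [ha']
      nlinarith [Real.rpow_nonneg (by linarith : (0:ℝ) ≤ 1+t) (-ϑ)]
    have ha2 : a ≤ 2 := by
      rw [ha']
      nlinarith [Real.rpow_le_one_of_one_le_of_nonpos
        (by linarith : (1:ℝ) ≤ 1+t) (by linarith : -ϑ ≤ 0)]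
    set p : ℝ := (inner ℝ v (v-u) : ℝ) with hp'
    set d : ℝ := ‖v‖^2 - ‖u‖^2 with hd'
    have hd : d = 2*p - r^2 := by
      have h := norm_sub_sq_real v (v - u)
      rw [sub_sub_cancel] at h
      rw [hd', hp', hr']
      linarith
    have hPu : (0:ℝ) < (1 + ‖u‖^2)^β := by
      have : (0:ℝ) < 1 + ‖u‖^2 := by positivity
      positivity
    have hPv : (0:ℝ) < (1 + ‖v‖^2)^β := by
      have : (0:ℝ) < 1 + ‖v‖^2 := by positivity
      positivity
    have hwu : 0 < wgt q ϑ β u t := wgt_pos q ϑ β u t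
    rw [show wgt q ϑ β v t * (r⁻¹
        * Real.exp (-(s₀ / 8) * r ^ 2 - s₀ / 8 * d ^ 2 / r ^ 2)
        * Real.exp (ε * r ^ 2) * (wgt q ϑ β u t)⁻¹)
      = (wgt q ϑ β v t * (r⁻¹
        * Real.exp (-(s₀ / 8) * r ^ 2 - s₀ / 8 * d ^ 2 / r ^ 2)
        * Real.exp (ε * r ^ 2))) / wgt q ϑ β u t by ring,
      div_le_iff₀ hwu]
    unfold wgt
    rw [show (1 + ‖v‖ ^ 2) ^ β * Real.exp (q / 8 * a * ‖v‖ ^ 2) * (r⁻¹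
        * Real.exp (-(s₀ / 8) * r ^ 2 - s₀ / 8 * d ^ 2 / r ^ 2) * Real.exp (ε * r ^ 2))
      = r⁻¹ * ((1 + ‖v‖ ^ 2) ^ β * (Real.exp (q / 8 * a * ‖v‖ ^ 2)
          * Real.exp (-(s₀ / 8) * r ^ 2 - s₀ / 8 * d ^ 2 / r ^ 2)
          * Real.exp (ε * r ^ 2))) by ring,
      ← Real.exp_add, ← Real.exp_add]
    rw [show (2:ℝ)^β * M * (r⁻¹ * exp (-(δ/8 * r^2) - δ/2 * |p|))
        * ((1 + ‖u‖ ^ 2) ^ β * Real.exp (q / 8 * a * ‖u‖ ^ 2))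
      = r⁻¹ * (((2:ℝ)^β * M * (1 + ‖u‖ ^ 2) ^ β)
          * (exp (-(δ/8 * r^2) - δ/2 * |p|) * Real.exp (q / 8 * a * ‖u‖ ^ 2))) by ring,
      ← Real.exp_add]
    apply mul_le_mul_of_nonneg_left _ (inv_nonneg.2 hr.le)
    have hpoly : (1 + ‖v‖ ^ 2) ^ β ≤ (2:ℝ)^β * M * (1 + ‖u‖ ^ 2) ^ β * exp (δ/16 * r^2) := by
      have h1 : 1 + ‖v‖^2 ≤ 2 * (1 + r^2) * (1 + ‖u‖^2) := by
        have : ‖v‖ ≤ ‖u‖ + r := by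
          rw [hr']
          calc ‖v‖ = ‖u + (v - u)‖ := by rw [add_sub_cancel]
          _ ≤ ‖u‖ + ‖v - u‖ := norm_add_le _ _
        nlinarith [mul_self_le_mul_self (norm_nonneg v) this, sq_nonneg (‖u‖ - r),
          sq_nonneg (‖u‖ * r), norm_nonneg u, hr.le]
      calc (1 + ‖v‖ ^ 2) ^ β ≤ (2 * (1 + r^2) * (1 + ‖u‖^2)) ^ β := by
            apply Real.rpow_le_rpow (by positivity) h1 hβ
      _ = (2:ℝ)^β * (1 + r^2)^β * (1 + ‖u‖^2)^β := by
            rw [Real.mul_rpow (by positivity) (by positivity),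
              Real.mul_rpow (by norm_num) (by positivity)]
      _ ≤ (2:ℝ)^β * (M * exp (δ/16 * r^2)) * (1 + ‖u‖^2)^β := by
            apply mul_le_mul_of_nonneg_right _ hPu.le
            apply mul_le_mul_of_nonneg_left (hM _ (by positivity)) (by positivity)
      _ = (2:ℝ)^β * M * (1 + ‖u‖ ^ 2) ^ β * exp (δ/16 * r^2) := by ring
    have hexpo : q / 8 * a * ‖v‖ ^ 2 + (-(s₀ / 8) * r ^ 2 - s₀ / 8 * d ^ 2 / r ^ 2) + ε * r ^ 2
        ≤ -(δ/8 * r^2) - δ/2 * |p| - δ/16 * r^2 + q / 8 * a * ‖u‖ ^ 2 := by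
      have := exponent_ineq q s₀ a ε δ r d p hq0 hqs ha1 ha2 hδ hε0 hεle hr hd
      have hexpand : q/8*a*d = q / 8 * a * ‖v‖ ^ 2 - q / 8 * a * ‖u‖ ^ 2 := by
        rw [hd']; ring
      linarith
    calc (1 + ‖v‖ ^ 2) ^ β
          * exp (q / 8 * a * ‖v‖ ^ 2 + (-(s₀ / 8) * r ^ 2 - s₀ / 8 * d ^ 2 / r ^ 2) + ε * r ^ 2)
        ≤ ((2:ℝ)^β * M * (1 + ‖u‖ ^ 2) ^ β * exp (δ/16 * r^2))
          * exp (q / 8 * a * ‖v‖ ^ 2 + (-(s₀ / 8) * r ^ 2 - s₀ / 8 * d ^ 2 / r ^ 2)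
            + ε * r ^ 2) :=
          mul_le_mul_of_nonneg_right hpoly (exp_nonneg _)
    _ = ((2:ℝ)^β * M * (1 + ‖u‖ ^ 2) ^ β) * exp (δ/16 * r^2
          + (q / 8 * a * ‖v‖ ^ 2 + (-(s₀ / 8) * r ^ 2 - s₀ / 8 * d ^ 2 / r ^ 2)
            + ε * r ^ 2)) := by
          rw [mul_assoc, ← Real.exp_add]
    _ ≤ ((2:ℝ)^β * M * (1 + ‖u‖ ^ 2) ^ β) * exp (δ/16 * r^2
          + (-(δ/8 * r^2) - δ/2 * |p| - δ/16 * r^2 + q / 8 * a * ‖u‖ ^ 2)) := by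
          apply mul_le_mul_of_nonneg_left _ (by positivity)
          apply Real.exp_le_exp.2
          linarith
    _ = ((2:ℝ)^β * M * (1 + ‖u‖ ^ 2) ^ β)
          * exp (-(δ/8 * r^2) - δ/2 * |p| + q / 8 * a * ‖u‖ ^ 2) := by
          congr 1
          ring_nf

end Stmt9Aux

/-- core of the second estimate of Lemma 2.3: weighted integral
estimate for the cut-off gain kernel. -/
theorem stmt9_weighted_cutoff_gain
    (β ϑ q s₀ : ℝ) (hβ : 0 ≤ β) (hϑ : 0 ≤ ϑ)
    (hq0 : 0 < q) (hqs : q < s₀) (hs₀ : s₀ < 1) :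
    ∃ ε₀ : ℝ, 0 < ε₀ ∧ ∀ ε : ℝ, 0 < ε → ε ≤ ε₀ →
      ∃ C : ℝ, 0 < C ∧ ∀ t : ℝ, 0 ≤ t → ∀ v : V3,
        wgt q ϑ β v t *
            (∫ u : V3, ‖v - u‖⁻¹ *
              Real.exp (-(s₀ / 8) * ‖v - u‖ ^ 2
                - s₀ / 8 * (‖v‖ ^ 2 - ‖u‖ ^ 2) ^ 2 / ‖v - u‖ ^ 2) *
              Real.exp (ε * ‖v - u‖ ^ 2) * (wgt q ϑ β u t)⁻¹)
          ≤ C * (1 + ‖v‖)⁻¹ := by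
  classical
  obtain ⟨M, hM0, hM⟩ := Stmt9Aux.poly_growth β ((s₀ - q)/8/16) hβ (by linarith)
  set δ : ℝ := (s₀ - q)/8 with hδdef
  have hδ0 : 0 < δ := by rw [hδdef]; linarith
  refine ⟨δ/4, by positivity, fun ε hε0 hεle => ?_⟩
  obtain ⟨K, hK0, hK⟩ := Stmt9Aux.integral_D_bound
    (show (0:ℝ) < δ/8 by positivity) (show (0:ℝ) < δ/2 by positivity)
  refine ⟨(2:ℝ)^β * M * K, by positivity, fun t ht v => ?_⟩
  obtain ⟨intD, hDle⟩ := hK v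
  have hM' : ∀ s, 0 ≤ s → (1+s)^β ≤ M * exp (δ/16 * s) := by
    intro s hs
    have := hM s hs
    rw [hδdef]
    exact this
  rw [← MeasureTheory.integral_const_mul]
  have hmono : ∫ u : V3, wgt q ϑ β v t * (‖v - u‖⁻¹ *
        Real.exp (-(s₀ / 8) * ‖v - u‖ ^ 2 - s₀ / 8 * (‖v‖ ^ 2 - ‖u‖ ^ 2) ^ 2 / ‖v - u‖ ^ 2) *
        Real.exp (ε * ‖v - u‖ ^ 2) * (wgt q ϑ β u t)⁻¹)
      ≤ ∫ u : V3, ((2:ℝ)^β * M) *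
        (‖v - u‖⁻¹ * exp (-(δ/8 * ‖v - u‖^2) - δ/2 * |(inner ℝ v (v-u) : ℝ)|)) := by
    refine integral_mono_of_nonneg ?_ (intD.const_mul _) ?_
    · filter_upwards with u
      have h1 := (Stmt9Aux.wgt_pos q ϑ β v t).le
      have h2 := (Stmt9Aux.wgt_pos q ϑ β u t).le
      positivity
    · filter_upwards with u
      exact Stmt9Aux.pointwise_bound β ϑ q s₀ hβ hϑ hq0 hqs δ hδdef hε0 hεle M hM0 hM' t ht v u
  refine hmono.trans ?_
  rw [MeasureTheory.integral_const_mul]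
  calc ((2:ℝ)^β * M) * ∫ u : V3,
        ‖v - u‖⁻¹ * exp (-(δ/8 * ‖v - u‖^2) - δ/2 * |(inner ℝ v (v-u) : ℝ)|)
      ≤ ((2:ℝ)^β * M) * (K / (1 + ‖v‖)) := by
        apply mul_le_mul_of_nonneg_left _ (by positivity)
        exact hDle
  _ = (2:ℝ)^β * M * K * (1 + ‖v‖)⁻¹ := by
        rw [div_eq_mul_inv]; ring


end
end

section
/- Negativity of the exponent quadratic form (equation (2.20)): Let 0 < q̃ < s₀ < 1. There exist constants C > 0 and ε₀ > 0 such that for all ε ∈ (0, ε₀], all v ∈ ℝ³ and all η ∈ ℝ³ \ {0}: -((s₀ - 8ε)/8)|η|² - (s₀/8)(|η|² - 2 v·η)²/|η|² - (q̃/4)(|η|² - 2 v·η) ≤ -C(|η|²/2 + |v·η|). -/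
noncomputable section

open MeasureTheory Real
open scoped ENNReal

set_option maxHeartbeats 1000000 in
lemma key (qt s₀ ε x p : ℝ) (hq : 0 < qt) (hqs : qt < s₀) (hs : s₀ < 1)
    (hε : 0 < ε) (hε0 : ε ≤ (s₀ - qt)/100) (hx : 0 < x) :
    -((s₀ - 8*ε)/8) * x - s₀/8 * (x - 2*p)^2 / x - qt/4 * (x - 2*p)
      ≤ -((s₀ - qt)/100) * (x/2 + |p|) := by
  set d := s₀ - qt with hd
  have hd0 : 0 < d := sub_pos.2 hqs
  have hds : d < s₀ := by simp only [hd]; linarith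
  have hdisc : (qt/4 + d/200)^2 ≤ 4 * (s₀/8 - ε - d/100) * (s₀/8) := by
    nlinarith [mul_pos hd0 (sub_pos.2 hds), mul_pos hd0 hd0, hε0,
      mul_pos hd0 hq, mul_pos hq hq]
  have hdisc2 : (qt/4 - d/200)^2 ≤ 4 * (s₀/8 - ε) * (s₀/8) := by
    nlinarith [hdisc, mul_pos hq hd0, mul_pos hd0 (hq.trans hqs)]
  have hT : (x - 2*p)^2 / x * x = (x - 2*p)^2 := div_mul_cancel₀ _ hx.ne'
  have hT0 : 0 ≤ (x - 2*p)^2 / x := div_nonneg (sq_nonneg _) hx.le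
  have hrw : s₀/8 * (x - 2*p)^2 / x = s₀/8 * ((x - 2*p)^2/x) := by ring
  rw [← sub_nonneg]
  have h : 0 ≤ (-(d/100) * (x/2 + |p|) - (-((s₀ - 8*ε)/8) * x - s₀/8 * ((x - 2*p)^2/x) - qt/4 * (x - 2*p))) * x := by
    rcases abs_cases p with ⟨h1, h2⟩ | ⟨h1, h2⟩ <;> rw [h1]
    · nlinarith [hT, sq_nonneg (2*(s₀/8 - ε - d/100)*x + (qt/4 + d/200)*(x-2*p)),
        mul_nonneg (by linarith [hdisc] : (0:ℝ) ≤ 4*(s₀/8 - ε - d/100)*(s₀/8) - (qt/4 + d/200)^2) (sq_nonneg (x-2*p))]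
    · nlinarith [hT, sq_nonneg (2*(s₀/8 - ε)*x + (qt/4 - d/200)*(x-2*p)),
        mul_nonneg (by linarith [hdisc2] : (0:ℝ) ≤ 4*(s₀/8 - ε)*(s₀/8) - (qt/4 - d/200)^2) (sq_nonneg (x-2*p))]
  have h2 := (mul_nonneg_iff_of_pos_right hx).mp h
  linarith [hrw]

/-- equation (2.20): negativity of the exponent quadratic form. -/
theorem stmt11_exponent_negativity
    (qt s₀ : ℝ) (hq : 0 < qt) (hqs : qt < s₀) (hs : s₀ < 1) :
    ∃ C ε₀ : ℝ, 0 < C ∧ 0 < ε₀ ∧ ∀ ε : ℝ, 0 < ε → ε ≤ ε₀ → ∀ v η : V3, η ≠ 0 →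
      -((s₀ - 8 * ε) / 8) * ‖η‖ ^ 2 - s₀ / 8 * (‖η‖ ^ 2 - 2 * rinner v η) ^ 2 / ‖η‖ ^ 2
          - qt / 4 * (‖η‖ ^ 2 - 2 * rinner v η)
        ≤ -C * (‖η‖ ^ 2 / 2 + |rinner v η|) := by
  refine ⟨(s₀ - qt)/100, (s₀ - qt)/100, by linarith, by linarith, ?_⟩
  intro ε hε hε0 v η hη
  have hx : 0 < ‖η‖ ^ 2 := pow_pos (norm_pos_iff.mpr hη) 2
  have := key qt s₀ ε (‖η‖ ^ 2) (rinner v η) hq hqs hs hε hε0 hx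
  linarith

end
end

section
/- Lower bound of the time-modified collision frequency (equation (3.4)): Let -3 < γ < 0, ϑ > 0, 0 < q < 1 and c₁ > 0. Then there exists a constant C > 0 (depending on γ, ϑ, q, c₁) such that for all t ≥ 0 and all v ∈ ℝ³: c₁ (1+|v|²)^{γ/2} + ϑ q |v|² / (8(1+t)^{ϑ+1}) ≥ C (1+t)^{(1+ϑ)γ/(2-γ)}. In particular, if ν(v) ≥ c₁(1+|v|²)^{γ/2}, then the modified collision frequency ν̃(v,t) = ν(v) + ϑq|v|²/(8(1+t)^{ϑ+1}) satisfies ν̃(v,t) ≥ C(1+t)^{(1+ϑ)γ/(2-γ)}, and the exponent satisfies 0 > (1+ϑ)γ/(2-γ) > -1 when ϑ < -2/γ. -/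
noncomputable section

open MeasureTheory Real
open scoped ENNReal

/-- equation (3.4): lower bound of the time-modified collision
frequency, with the exponent range `(1+ϑ)γ/(2-γ) ∈ (-1,0)` when `ϑ < -2/γ`. -/
theorem stmt18_nutilde_lower_bound
    (γ ϑ q c₁ : ℝ) (q₀ : ℝ → ℝ)
    (hγl : -3 < γ) (hγu : γ < 0) (hϑ : 0 < ϑ) (hq0 : 0 < q) (hq1 : q < 1)
    (hc₁ : 0 < c₁) :
    (∃ C : ℝ, 0 < C ∧
      (∀ t : ℝ, 0 ≤ t → ∀ v : V3,
        C * (1 + t) ^ ((1 + ϑ) * γ / (2 - γ)) ≤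
          c₁ * (1 + ‖v‖ ^ 2) ^ (γ / 2) + ϑ * q * ‖v‖ ^ 2 / (8 * (1 + t) ^ (ϑ + 1))) ∧
      (∀ t : ℝ, 0 ≤ t → ∀ v : V3,
        c₁ * (1 + ‖v‖ ^ 2) ^ (γ / 2) ≤ nuColl γ q₀ v →
          C * (1 + t) ^ ((1 + ϑ) * γ / (2 - γ)) ≤ nuTilde γ q ϑ q₀ v t)) ∧
    (ϑ < -2 / γ → -1 < (1 + ϑ) * γ / (2 - γ) ∧ (1 + ϑ) * γ / (2 - γ) < 0) := by

  have h2γ : (0:ℝ) < 2 - γ := by linarith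
  have key : ∀ t : ℝ, 0 ≤ t → ∀ v : V3,
      min (c₁ * 2 ^ (γ/2)) (ϑ*q/8) * (1 + t) ^ ((1 + ϑ) * γ / (2 - γ)) ≤
        c₁ * (1 + ‖v‖ ^ 2) ^ (γ / 2) + ϑ * q * ‖v‖ ^ 2 / (8 * (1 + t) ^ (ϑ + 1)) := by
    intro t ht v
    set s : ℝ := 1 + t with hs_def
    have hs1 : (1:ℝ) ≤ s := by simp [hs_def]; linarith
    have hs0 : (0:ℝ) < s := by linarith
    set α : ℝ := 2 * (1 + ϑ) / (2 - γ) with hα_def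
    have hα0 : 0 < α := by
      apply div_pos (by linarith) h2γ
    have hsα1 : (1:ℝ) ≤ s ^ α := by
      have := Real.rpow_le_rpow_of_exponent_le hs1 hα0.le
      simpa using this
    have hsα0 : (0:ℝ) < s ^ α := by positivity
    have hid1 : α * (γ/2) = (1 + ϑ) * γ / (2 - γ) := by
      rw [hα_def]; field_simp [hα_def]
    have hid2 : α - (ϑ+1) = (1 + ϑ) * γ / (2 - γ) := by
      rw [hα_def]; field_simp [hα_def]; ring
    have hst1 : (0:ℝ) < s ^ (ϑ+1) := Real.rpow_pos_of_pos hs0 _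
    rcases le_or_gt (1 + ‖v‖^2) (2 * s ^ α) with h | h
    · -- small velocity case
      have hA : (0:ℝ) < 1 + ‖v‖^2 := by positivity
      have h1 : (2 * s ^ α) ^ (γ/2) ≤ (1 + ‖v‖^2) ^ (γ/2) :=
        Real.rpow_le_rpow_of_nonpos hA h (by linarith)
      have h2 : (2 * s ^ α) ^ (γ/2) = 2 ^ (γ/2) * s ^ ((1 + ϑ) * γ / (2 - γ)) := by
        rw [Real.mul_rpow (by norm_num) hsα0.le, ← Real.rpow_mul hs0.le, hid1]
      have hterm2 : 0 ≤ ϑ * q * ‖v‖ ^ 2 / (8 * s ^ (ϑ + 1)) := by positivity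
      have hmin : min (c₁ * 2 ^ (γ/2)) (ϑ*q/8) ≤ c₁ * 2 ^ (γ/2) := min_le_left _ _
      have hse : (0:ℝ) < s ^ ((1 + ϑ) * γ / (2 - γ)) := Real.rpow_pos_of_pos hs0 _
      calc min (c₁ * 2 ^ (γ/2)) (ϑ*q/8) * s ^ ((1 + ϑ) * γ / (2 - γ))
          ≤ (c₁ * 2 ^ (γ/2)) * s ^ ((1 + ϑ) * γ / (2 - γ)) := by
            exact mul_le_mul_of_nonneg_right hmin hse.le
        _ = c₁ * (2 * s ^ α) ^ (γ/2) := by rw [h2]; ring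
        _ ≤ c₁ * (1 + ‖v‖^2) ^ (γ/2) := by
            exact mul_le_mul_of_nonneg_left h1 hc₁.le
        _ ≤ c₁ * (1 + ‖v‖^2) ^ (γ/2) + ϑ * q * ‖v‖ ^ 2 / (8 * s ^ (ϑ + 1)) := by linarith
    · -- large velocity case
      have hv : s ^ α ≤ ‖v‖^2 := by nlinarith
      have hterm1 : 0 ≤ c₁ * (1 + ‖v‖^2) ^ (γ/2) := by positivity
      have hmin : min (c₁ * 2 ^ (γ/2)) (ϑ*q/8) ≤ ϑ*q/8 := min_le_right _ _
      have hse : (0:ℝ) < s ^ ((1 + ϑ) * γ / (2 - γ)) := Real.rpow_pos_of_pos hs0 _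
      have h3 : (ϑ*q/8) * s ^ ((1 + ϑ) * γ / (2 - γ)) ≤ ϑ * q * ‖v‖ ^ 2 / (8 * s ^ (ϑ + 1)) := by
        have : s ^ ((1 + ϑ) * γ / (2 - γ)) = s ^ α / s ^ (ϑ+1) := by
          rw [← hid2, Real.rpow_sub hs0]
        rw [this, show ϑ*q/8 * (s ^ α / s ^ (ϑ+1)) = ϑ*q*s^α/(8*s^(ϑ+1)) by ring]
        gcongr
      calc min (c₁ * 2 ^ (γ/2)) (ϑ*q/8) * s ^ ((1 + ϑ) * γ / (2 - γ))
          ≤ (ϑ*q/8) * s ^ ((1 + ϑ) * γ / (2 - γ)) := mul_le_mul_of_nonneg_right hmin hse.le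
        _ ≤ ϑ * q * ‖v‖ ^ 2 / (8 * s ^ (ϑ + 1)) := h3
        _ ≤ c₁ * (1 + ‖v‖^2) ^ (γ/2) + ϑ * q * ‖v‖ ^ 2 / (8 * s ^ (ϑ + 1)) := by linarith
  have hCpos : 0 < min (c₁ * 2 ^ (γ/2)) (ϑ*q/8) := by
    apply lt_min
    · positivity
    · positivity
  refine ⟨⟨min (c₁ * 2 ^ (γ/2)) (ϑ*q/8), hCpos, key, ?_⟩, ?_⟩
  · intro t ht v hν
    have := key t ht v
    unfold nuTilde
    linarith
  · intro hϑγ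
    rw [lt_div_iff_of_neg hγu] at hϑγ
    constructor
    · rw [lt_div_iff₀ h2γ]; nlinarith
    · apply div_neg_of_neg_of_pos _ h2γ
      nlinarith


end
end
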